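/- Let λ be a strict partition (a composition with strictly decreasing parts; such a λ is automatically a peak composition). Then PYQS_λ = Σ_α sgn(σ_α) · QSQ_α as formal power series, where the sum is over all peak compositions α with λ(α) = λ, λ(α) denotes the partition obtained by sorting the parts of α in decreasing order, and σ_α is the unique permutation of the positions of the parts of α that rearranges α into λ(α) (unique because the parts of α are distinct), sgn denoting its sign. -/

import Mathlib

namespace PaperSPIT

/-- The `j`-th part (1-indexed) of a composition presented as a list. -/
def part (α : List ℕ) (j : ℕ) : ℕ := α.getD (j - 1) 0

/-- The largest part. -/
def maxPart (α : List ℕ) : ℕ := α.foldr max 0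

/-- The composition diagram: boxes `(i, j)` (column `i`, row `j`), both 1-indexed,
rows numbered from bottom to top. -/
def cd (α : List ℕ) : Finset (ℕ × ℕ) :=
  (Finset.Icc 1 (maxPart α) ×ˢ Finset.Icc 1 α.length).filter fun p => p.1 ≤ part α p.2

/-- `α` is a composition of `n`. -/
def IsComposition (n : ℕ) (α : List ℕ) : Prop :=
  (∀ a ∈ α, 0 < a) ∧ α.sum = n

/-- `α` is a peak composition of `n`: all parts except possibly the last are `> 1`. -/
def IsPeakComposition (n : ℕ) (α : List ℕ) : Prop :=
  IsComposition n α ∧ ∀ i, i + 1 < α.length → 1 < α.getD i 0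

/-- A standard filling of `cd α`: a bijection from the boxes onto `{1, …, n}`
(normalized to be `0` off the diagram). -/
def IsStandardFilling (α : List ℕ) (T : ℕ × ℕ → ℕ) : Prop :=
  Set.BijOn T (cd α : Set (ℕ × ℕ)) (Set.Icc 1 α.sum) ∧
  ∀ p : ℕ × ℕ, p ∉ cd α → T p = 0

def RowsIncrease (α : List ℕ) (T : ℕ × ℕ → ℕ) : Prop :=
  ∀ i j : ℕ, (i, j) ∈ cd α → (i + 1, j) ∈ cd α → T (i, j) < T (i + 1, j)

def RowsWeaklyIncrease (α : List ℕ) (T : ℕ × ℕ → ℕ) : Prop :=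
  ∀ i j : ℕ, (i, j) ∈ cd α → (i + 1, j) ∈ cd α → T (i, j) ≤ T (i + 1, j)

def FirstColIncreases (α : List ℕ) (T : ℕ × ℕ → ℕ) : Prop :=
  ∀ j : ℕ, (1, j) ∈ cd α → (1, j + 1) ∈ cd α → T (1, j) < T (1, j + 1)

/-- Standard immaculate tableau. -/
def IsSIT (α : List ℕ) (T : ℕ × ℕ → ℕ) : Prop :=
  IsStandardFilling α T ∧ RowsIncrease α T ∧ FirstColIncreases α T

/-- Peak-tableau condition: for every `1 ≤ k ≤ n` the boxes with entries `≤ k`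
form the diagram of a peak composition. -/
def PeakCond (α : List ℕ) (T : ℕ × ℕ → ℕ) : Prop :=
  ∀ k : ℕ, 1 ≤ k → k ≤ α.sum → ∃ β : List ℕ,
    IsPeakComposition k β ∧ (cd α).filter (fun p => T p ≤ k) = cd β

/-- Standard peak immaculate tableau. -/
def IsSPIT (α : List ℕ) (T : ℕ × ℕ → ℕ) : Prop := IsSIT α T ∧ PeakCond α T

def SPITset (α : List ℕ) : Set (ℕ × ℕ → ℕ) := {T | IsSPIT α T}

/-- The Young triple condition. -/
def YoungTriple (α : List ℕ) (T : ℕ × ℕ → ℕ) : Prop :=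
  ∀ k i j : ℕ, i < j → (k, j) ∈ cd α → (k + 1, i) ∈ cd α → T (k, j) ≤ T (k + 1, i) →
    (k + 1, j) ∈ cd α ∧ T (k + 1, j) < T (k + 1, i)

/-- Standard Young composition tableau. -/
def IsSYCT (α : List ℕ) (T : ℕ × ℕ → ℕ) : Prop :=
  IsStandardFilling α T ∧ RowsIncrease α T ∧ FirstColIncreases α T ∧ YoungTriple α T

def SYCTset (α : List ℕ) : Set (ℕ × ℕ → ℕ) := {T | IsSYCT α T}

/-- Standard peak Young composition tableau. -/
def IsSPYCT (α : List ℕ) (T : ℕ × ℕ → ℕ) : Prop := IsSYCT α T ∧ PeakCond α T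

def SPYCTset (α : List ℕ) : Set (ℕ × ℕ → ℕ) := {T | IsSPYCT α T}

/-- Row reading word `w_r`: rows from top to bottom, each row left to right. -/
def wR (α : List ℕ) (T : ℕ × ℕ → ℕ) : List ℕ :=
  ((List.range α.length).reverse.map fun j =>
    (List.range (part α (j + 1))).map fun i => T (i + 1, j + 1)).flatten

/-- The `i`-th column of a filling, read bottom to top. -/
def colList (α : List ℕ) (T : ℕ × ℕ → ℕ) (i : ℕ) : List ℕ :=
  ((List.range α.length).filter fun j => decide (i ≤ part α (j + 1))).map
    fun j => T (i, j + 1)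

/-- Column reading word `w_c`: columns left to right, each column bottom to top. -/
def wC (α : List ℕ) (T : ℕ × ℕ → ℕ) : List ℕ :=
  ((List.range (maxPart α)).map fun i => colList α T (i + 1)).flatten

/-- Young reading word `w_Y`: first column top to bottom, then subsequent columns
bottom to top, columns left to right. -/
def wY (α : List ℕ) (T : ℕ × ℕ → ℕ) : List ℕ :=
  (colList α T 1).reverse ++
    ((List.range (maxPart α - 1)).map fun i => colList α T (i + 2)).flatten

/-- Descent set of a word with distinct letters: `i` such that `i` and `i+1` occur
and `i` occurs to the right of `i+1`. -/
def DesWord (w : List ℕ) : Finset ℕ :=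
  w.toFinset.filter fun i => (i + 1) ∈ w ∧ w.idxOf (i + 1) < w.idxOf i


def setComp (α : List ℕ) : Finset ℕ :=
  (((α.scanl (· + ·) 0).drop 1).dropLast).toFinset

def compOf (n : ℕ) (I : Finset ℕ) : List ℕ :=
  List.zipWith (fun a b => a - b) (I.sort (· ≤ ·) ++ [n]) (0 :: I.sort (· ≤ ·))

def PeakSet (X : Finset ℕ) : Finset ℕ := X.filter fun i => 1 < i ∧ i - 1 ∉ X

noncomputable def Fqs (n : ℕ) (α : List ℕ) : MvPowerSeries ℕ ℤ := fun d =>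
  (Set.ncard {f : Fin n → ℕ |
      (∀ j, 1 ≤ f j) ∧ Monotone f ∧
      (∀ j k : Fin n, (k : ℕ) = (j : ℕ) + 1 → ((j : ℕ) + 1) ∈ setComp α → f j < f k) ∧
      ∀ m : ℕ, d m = (Finset.univ.filter fun j : Fin n => f j = m).card} : ℤ)

noncomputable def Kqs (n : ℕ) (α : List ℕ) : MvPowerSeries ℕ ℤ :=
  (2 ^ ((setComp α).card + 1) : ℕ) •
    ∑ β : Composition n,
      if setComp α ⊆ symmDiff (setComp β.blocks) ((setComp β.blocks).image (· + 1))
      then Fqs n β.blocks else 0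

/-- The quasisymmetric Schur `Q`-function of a peak composition `α` of `n`. -/
noncomputable def QSQ (n : ℕ) (α : List ℕ) : MvPowerSeries ℕ ℤ :=
  ∑ᶠ T ∈ SPITset α, Kqs n (compOf n (PeakSet (DesWord (wC α T))))

/-- The peak Young quasisymmetric Schur function of a peak composition `α` of `n`. -/
noncomputable def PYQS (n : ℕ) (α : List ℕ) : MvPowerSeries ℕ ℤ :=
  ∑ᶠ T ∈ SPYCTset α, Kqs n (compOf n (PeakSet (DesWord (wY α T))))

-- ===================== Auxiliary development =====================
open List in
lemma aux_indexOf_lt_of_pairwise {X : Type*} [DecidableEq X] {R : X → X → Prop}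
    (hasym : ∀ x y, R x y → ¬ R y x) :
    ∀ {l : List X} {a b : X}, l.Pairwise R → a ∈ l → b ∈ l → R a b →
      l.idxOf a < l.idxOf b
  | [], a, b, _, ha, _, _ => by simp at ha
  | x :: t, a, b, hp, ha, hb, hab => by
    rcases List.pairwise_cons.1 hp with ⟨hx, ht⟩
    by_cases hax : a = x
    · subst hax
      have hbx : b ≠ a := fun h => hasym a b hab (h ▸ hab)
      have hbt : b ∈ t := by
        rcases List.mem_cons.1 hb with h | h
        · exact absurd h.symm (fun h => hbx h.symm)
        · exact h
      rw [List.idxOf_cons_self, List.idxOf_cons_ne _ (Ne.symm hbx)]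
      exact Nat.succ_pos _
    · have hat : a ∈ t := by
        rcases List.mem_cons.1 ha with h | h
        · exact absurd h hax
        · exact h
      have hbx : b ≠ x := by
        intro h
        exact hasym x a (hx a hat) (h ▸ hab)
      have hbt : b ∈ t := by
        rcases List.mem_cons.1 hb with h | h
        · exact absurd h hbx
        · exact h
      rw [List.idxOf_cons_ne _ (fun h => hax h.symm), List.idxOf_cons_ne _ (Ne.symm hbx)]
      exact Nat.succ_lt_succ (aux_indexOf_lt_of_pairwise hasym ht hat hbt hab)

lemma aux_indexOf_map {X Y : Type*} [DecidableEq X] [DecidableEq Y] {f : X → Y} :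
    ∀ {l : List X} {a : X}, (∀ x ∈ l, ∀ y ∈ l, f x = f y → x = y) → a ∈ l →
      (l.map f).idxOf (f a) = l.idxOf a
  | [], a, _, ha => by simp at ha
  | x :: t, a, hinj, ha => by
    by_cases hax : a = x
    · subst hax
      simp [List.idxOf_cons_self]
    · have hat : a ∈ t := by
        rcases List.mem_cons.1 ha with h | h
        · exact absurd h hax
        · exact h
      have hfa : f a ≠ f x := fun h =>
        hax (hinj a ha x (List.mem_cons_self) h)
      rw [List.map_cons, List.idxOf_cons_ne _ (Ne.symm hfa), List.idxOf_cons_ne _ (fun h => hax h.symm)]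
      exact congrArg Nat.succ
        (aux_indexOf_map (fun u hu v hv => hinj u (List.mem_cons_of_mem _ hu) v (List.mem_cons_of_mem _ hv)) hat)

/-- colex order on boxes: by column, then by row. -/
def boxLT (p q : ℕ × ℕ) : Prop := p.1 < q.1 ∨ (p.1 = q.1 ∧ p.2 < q.2)

lemma boxLT_asymm : ∀ x y, boxLT x y → ¬ boxLT y x := by
  rintro x y (h | ⟨h, h2⟩) (h' | ⟨h', h2'⟩) <;> omega

lemma boxLT_trichot (p q : ℕ × ℕ) : boxLT p q ∨ p = q ∨ boxLT q p := by
  rcases p with ⟨a, b⟩; rcases q with ⟨c, d⟩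
  unfold boxLT; simp only [Prod.mk.injEq]
  omega

/-- list of boxes in column `c+1`, bottom to top. -/
def colBoxes (α : List ℕ) (c : ℕ) : List (ℕ × ℕ) :=
  ((List.range α.length).filter fun j => decide ((c + 1) ≤ part α (j + 1))).map
    fun j => (c + 1, j + 1)

def boxListC (α : List ℕ) : List (ℕ × ℕ) :=
  ((List.range (maxPart α)).map (colBoxes α)).flatten

def boxListY (α : List ℕ) : List (ℕ × ℕ) :=
  (colBoxes α 0).reverse ++
    ((List.range (maxPart α - 1)).map fun i => colBoxes α (i + 1)).flatten

lemma colList_eq_map (α : List ℕ) (T : ℕ × ℕ → ℕ) (c : ℕ) :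
    colList α T (c + 1) = (colBoxes α c).map T := by
  unfold colList colBoxes
  rw [List.map_map]
  rfl

lemma wC_eq_map (α : List ℕ) (T : ℕ × ℕ → ℕ) : wC α T = (boxListC α).map T := by
  unfold wC boxListC
  rw [List.map_flatten, List.map_map]
  congr 1
  apply List.map_congr_left
  intro i _
  exact colList_eq_map α T i

lemma wY_eq_map (α : List ℕ) (T : ℕ × ℕ → ℕ) : wY α T = (boxListY α).map T := by
  unfold wY boxListY
  rw [List.map_append, List.map_reverse, List.map_flatten, List.map_map]
  congr 2
  · have h0 : colList α T 1 = (colBoxes α 0).map T := colList_eq_map α T 0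
    rw [h0]
  · apply List.map_congr_left
    intro i _
    exact colList_eq_map α T (i + 1)

lemma mem_colBoxes {α : List ℕ} {c : ℕ} {p : ℕ × ℕ} :
    p ∈ colBoxes α c ↔ p.1 = c + 1 ∧ 1 ≤ p.2 ∧ p.2 ≤ α.length ∧ p.1 ≤ part α p.2 := by
  unfold colBoxes
  simp only [List.mem_map, List.mem_filter, List.mem_range, decide_eq_true_eq]
  constructor
  · rintro ⟨j, ⟨hj, hle⟩, rfl⟩
    exact ⟨rfl, Nat.succ_le_succ (Nat.zero_le _), Nat.succ_le_of_lt hj, hle⟩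
  · rintro ⟨h1, h2, h3, h4⟩
    refine ⟨p.2 - 1, ⟨by omega, ?_⟩, ?_⟩
    · have : p.2 - 1 + 1 = p.2 := by omega
      rw [this, ← h1]; exact h4
    · have h2' : p.2 - 1 + 1 = p.2 := by omega
      rcases p with ⟨a, b⟩
      simp only at h1 h2' ⊢
      rw [h1, h2']

lemma le_maxPart_of_mem {α : List ℕ} {x : ℕ} (hx : x ∈ α) : x ≤ maxPart α := by
  unfold maxPart
  induction α with
  | nil => simp at hx
  | cons a t ih =>
    rcases List.mem_cons.1 hx with h | h
    · subst h; exact le_max_left _ _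
    · exact le_trans (ih h) (le_max_right _ _)

lemma part_le_maxPart {α : List ℕ} {r : ℕ} (h1 : 1 ≤ r) (h2 : r ≤ α.length) :
    part α r ≤ maxPart α := by
  unfold part
  have hlt : r - 1 < α.length := by omega
  rw [List.getD_eq_getElem α 0 hlt]
  exact le_maxPart_of_mem (List.getElem_mem _)

lemma mem_cd_iff {α : List ℕ} {p : ℕ × ℕ} :
    p ∈ cd α ↔ 1 ≤ p.1 ∧ p.1 ≤ part α p.2 ∧ 1 ≤ p.2 ∧ p.2 ≤ α.length := by
  unfold cd
  rw [Finset.mem_filter, Finset.mem_product, Finset.mem_Icc, Finset.mem_Icc]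
  constructor
  · rintro ⟨⟨⟨h1, _⟩, h3, h4⟩, h5⟩
    exact ⟨h1, h5, h3, h4⟩
  · rintro ⟨h1, h2, h3, h4⟩
    exact ⟨⟨⟨h1, le_trans h2 (part_le_maxPart h3 h4)⟩, h3, h4⟩, h2⟩

lemma mem_boxListC {α : List ℕ} {p : ℕ × ℕ} : p ∈ boxListC α ↔ p ∈ cd α := by
  unfold boxListC
  rw [List.mem_flatten]
  constructor
  · rintro ⟨lcol, hl, hp⟩
    rcases List.mem_map.1 hl with ⟨c, hc, rfl⟩
    rcases mem_colBoxes.1 hp with ⟨h1, h2, h3, h4⟩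
    exact mem_cd_iff.2 ⟨by omega, h4, h2, h3⟩
  · intro hp
    rcases mem_cd_iff.1 hp with ⟨h1, h2, h3, h4⟩
    refine ⟨colBoxes α (p.1 - 1), List.mem_map.2 ⟨p.1 - 1, List.mem_range.2 ?_, rfl⟩, ?_⟩
    · have := le_trans h2 (part_le_maxPart h3 h4); omega
    · exact mem_colBoxes.2 ⟨by omega, h3, h4, h2⟩

lemma mem_boxListY {α : List ℕ} {p : ℕ × ℕ} : p ∈ boxListY α ↔ p ∈ cd α := by
  unfold boxListY
  rw [List.mem_append, List.mem_reverse, List.mem_flatten]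
  constructor
  · rintro (hp | ⟨lcol, hl, hp⟩)
    · rcases mem_colBoxes.1 hp with ⟨h1, h2, h3, h4⟩
      exact mem_cd_iff.2 ⟨by omega, h4, h2, h3⟩
    · rcases List.mem_map.1 hl with ⟨c, hc, rfl⟩
      rcases mem_colBoxes.1 hp with ⟨h1, h2, h3, h4⟩
      exact mem_cd_iff.2 ⟨by omega, h4, h2, h3⟩
  · intro hp
    rcases mem_cd_iff.1 hp with ⟨h1, h2, h3, h4⟩
    rcases Nat.lt_or_ge p.1 2 with hc | hc
    · left
      exact mem_colBoxes.2 ⟨by omega, h3, h4, h2⟩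
    · right
      refine ⟨colBoxes α (p.1 - 1), List.mem_map.2 ⟨p.1 - 2, List.mem_range.2 ?_, ?_⟩, ?_⟩
      · have := le_trans h2 (part_le_maxPart h3 h4); omega
      · congr 1; omega
      · exact mem_colBoxes.2 ⟨by omega, h3, h4, h2⟩

lemma pairwise_colBoxes (α : List ℕ) (c : ℕ) :
    (colBoxes α c).Pairwise (fun p q => p.1 = c + 1 ∧ q.1 = c + 1 ∧ p.2 < q.2) := by
  unfold colBoxes
  rw [List.pairwise_map]
  have h := List.pairwise_lt_range (n := α.length)
  have h2 := List.Pairwise.filter (fun j => decide ((c + 1) ≤ part α (j + 1))) h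
  exact h2.imp (fun hlt => ⟨rfl, rfl, by omega⟩)

lemma pairwise_boxListC (α : List ℕ) : (boxListC α).Pairwise boxLT := by
  unfold boxListC
  rw [List.pairwise_flatten]
  constructor
  · intro lcol hl
    rcases List.mem_map.1 hl with ⟨c, _, rfl⟩
    exact (pairwise_colBoxes α c).imp (fun ⟨h1, h2, h3⟩ => Or.inr ⟨by omega, h3⟩)
  · rw [List.pairwise_map]
    refine List.pairwise_lt_range.imp ?_
    intro c c' hlt x hx y hy
    rcases mem_colBoxes.1 hx with ⟨hx1, _⟩
    rcases mem_colBoxes.1 hy with ⟨hy1, _⟩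
    exact Or.inl (by omega)

/-- reading order for `wY`: first column top-to-bottom first, then colex on the rest. -/
def yLT (p q : ℕ × ℕ) : Prop :=
  (p.1 = 1 ∧ q.1 = 1 ∧ q.2 < p.2) ∨ (p.1 = 1 ∧ 2 ≤ q.1) ∨ (2 ≤ p.1 ∧ 2 ≤ q.1 ∧ boxLT p q)

lemma yLT_asymm : ∀ x y, yLT x y → ¬ yLT y x := by
  rintro x y h h'
  unfold yLT boxLT at h h'
  omega

lemma pairwise_boxListY (α : List ℕ) : (boxListY α).Pairwise yLT := by
  unfold boxListY
  rw [List.pairwise_append]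
  refine ⟨?_, ?_, ?_⟩
  · rw [List.pairwise_reverse]
    exact (pairwise_colBoxes α 0).imp (fun ⟨h1, h2, h3⟩ => Or.inl ⟨h2, h1, h3⟩)
  · rw [List.pairwise_flatten]
    constructor
    · intro lcol hl
      rcases List.mem_map.1 hl with ⟨c, _, rfl⟩
      exact (pairwise_colBoxes α (c + 1)).imp
        (fun ⟨h1, h2, h3⟩ => Or.inr (Or.inr ⟨by omega, by omega, Or.inr ⟨by omega, h3⟩⟩))
    · rw [List.pairwise_map]
      refine List.pairwise_lt_range.imp ?_
      intro c c' hlt x hx y hy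
      rcases mem_colBoxes.1 hx with ⟨hx1, _⟩
      rcases mem_colBoxes.1 hy with ⟨hy1, _⟩
      exact Or.inr (Or.inr ⟨by omega, by omega, Or.inl (by omega)⟩)
  · intro a ha b hb
    rw [List.mem_reverse] at ha
    rcases mem_colBoxes.1 ha with ⟨ha1, _⟩
    rcases List.mem_flatten.1 hb with ⟨lcol, hl, hb'⟩
    rcases List.mem_map.1 hl with ⟨c, _, rfl⟩
    rcases mem_colBoxes.1 hb' with ⟨hb1, _⟩
    exact Or.inr (Or.inl ⟨ha1, by omega⟩)

lemma nodup_boxListC (α : List ℕ) : (boxListC α).Nodup :=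
  (pairwise_boxListC α).imp (fun h => by unfold boxLT at h; rintro rfl; omega)

lemma nodup_boxListY (α : List ℕ) : (boxListY α).Nodup :=
  (pairwise_boxListY α).imp (fun h => by unfold yLT boxLT at h; rintro rfl; omega)

lemma yLT_trichot {p q : ℕ × ℕ} (hp1 : 1 ≤ p.1) (hq1 : 1 ≤ q.1) :
    yLT p q ∨ p = q ∨ yLT q p := by
  rcases p with ⟨a, b⟩; rcases q with ⟨c, d⟩
  unfold yLT boxLT
  simp only [Prod.mk.injEq]
  omega

section PosLemmas

variable {α : List ℕ} {T : ℕ × ℕ → ℕ}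

/-- injectivity of a filling on the diagram -/
def InjCd (α : List ℕ) (T : ℕ × ℕ → ℕ) : Prop :=
  ∀ p ∈ cd α, ∀ q ∈ cd α, T p = T q → p = q

lemma IsStandardFilling.injCd (h : IsStandardFilling α T) : InjCd α T := by
  intro p hp q hq hpq
  exact h.1.2.1 hp hq hpq

lemma mem_wC_iff {a : ℕ} : a ∈ wC α T ↔ ∃ p ∈ cd α, T p = a := by
  rw [wC_eq_map, List.mem_map]
  constructor
  · rintro ⟨p, hp, rfl⟩; exact ⟨p, mem_boxListC.1 hp, rfl⟩
  · rintro ⟨p, hp, rfl⟩; exact ⟨p, mem_boxListC.2 hp, rfl⟩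

lemma mem_wY_iff {a : ℕ} : a ∈ wY α T ↔ ∃ p ∈ cd α, T p = a := by
  rw [wY_eq_map, List.mem_map]
  constructor
  · rintro ⟨p, hp, rfl⟩; exact ⟨p, mem_boxListY.1 hp, rfl⟩
  · rintro ⟨p, hp, rfl⟩; exact ⟨p, mem_boxListY.2 hp, rfl⟩

lemma indexOf_wC_lt (hinj : InjCd α T) {p q : ℕ × ℕ} (hp : p ∈ cd α) (hq : q ∈ cd α)
    (h : boxLT p q) : (wC α T).idxOf (T p) < (wC α T).idxOf (T q) := by
  rw [wC_eq_map]
  have hinj' : ∀ x ∈ boxListC α, ∀ y ∈ boxListC α, T x = T y → x = y :=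
    fun x hx y hy => hinj x (mem_boxListC.1 hx) y (mem_boxListC.1 hy)
  rw [aux_indexOf_map hinj' (mem_boxListC.2 hp), aux_indexOf_map hinj' (mem_boxListC.2 hq)]
  exact aux_indexOf_lt_of_pairwise boxLT_asymm (pairwise_boxListC α)
    (mem_boxListC.2 hp) (mem_boxListC.2 hq) h

lemma indexOf_wC_lt_iff (hinj : InjCd α T) {p q : ℕ × ℕ} (hp : p ∈ cd α) (hq : q ∈ cd α) :
    (wC α T).idxOf (T p) < (wC α T).idxOf (T q) ↔ boxLT p q := by
  constructor
  · intro h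
    rcases boxLT_trichot p q with h' | h' | h'
    · exact h'
    · subst h'; omega
    · exact absurd (indexOf_wC_lt hinj hq hp h') (by omega)
  · exact indexOf_wC_lt hinj hp hq

lemma indexOf_wY_lt (hinj : InjCd α T) {p q : ℕ × ℕ} (hp : p ∈ cd α) (hq : q ∈ cd α)
    (h : yLT p q) : (wY α T).idxOf (T p) < (wY α T).idxOf (T q) := by
  rw [wY_eq_map]
  have hinj' : ∀ x ∈ boxListY α, ∀ y ∈ boxListY α, T x = T y → x = y :=
    fun x hx y hy => hinj x (mem_boxListY.1 hx) y (mem_boxListY.1 hy)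
  rw [aux_indexOf_map hinj' (mem_boxListY.2 hp), aux_indexOf_map hinj' (mem_boxListY.2 hq)]
  exact aux_indexOf_lt_of_pairwise yLT_asymm (pairwise_boxListY α)
    (mem_boxListY.2 hp) (mem_boxListY.2 hq) h

lemma indexOf_wY_lt_iff (hinj : InjCd α T) {p q : ℕ × ℕ} (hp : p ∈ cd α) (hq : q ∈ cd α) :
    (wY α T).idxOf (T p) < (wY α T).idxOf (T q) ↔ yLT p q := by
  constructor
  · intro h
    rcases yLT_trichot (mem_cd_iff.1 hp).1 (mem_cd_iff.1 hq).1 with h' | h' | h'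
    · exact h'
    · subst h'; omega
    · exact absurd (indexOf_wY_lt hinj hq hp h') (by omega)
  · exact indexOf_wY_lt hinj hp hq

lemma mem_DesWord_wC (hinj : InjCd α T) {i : ℕ} :
    i ∈ DesWord (wC α T) ↔
      ∃ p ∈ cd α, ∃ q ∈ cd α, T p = i ∧ T q = i + 1 ∧ boxLT q p := by
  unfold DesWord
  rw [Finset.mem_filter, List.mem_toFinset]
  constructor
  · rintro ⟨hi, hi1, hlt⟩
    rcases mem_wC_iff.1 hi with ⟨p, hp, hTp⟩
    rcases mem_wC_iff.1 hi1 with ⟨q, hq, hTq⟩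
    refine ⟨p, hp, q, hq, hTp, hTq, ?_⟩
    rw [← hTq] at hlt; rw [← hTp] at hlt
    exact (indexOf_wC_lt_iff hinj hq hp).1 hlt
  · rintro ⟨p, hp, q, hq, hTp, hTq, hqp⟩
    refine ⟨mem_wC_iff.2 ⟨p, hp, hTp⟩, mem_wC_iff.2 ⟨q, hq, hTq⟩, ?_⟩
    have := indexOf_wC_lt hinj hq hp hqp
    rw [hTp, hTq] at this
    exact this

lemma mem_DesWord_wY (hinj : InjCd α T) {i : ℕ} :
    i ∈ DesWord (wY α T) ↔
      ∃ p ∈ cd α, ∃ q ∈ cd α, T p = i ∧ T q = i + 1 ∧ yLT q p := by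
  unfold DesWord
  rw [Finset.mem_filter, List.mem_toFinset]
  constructor
  · rintro ⟨hi, hi1, hlt⟩
    rcases mem_wY_iff.1 hi with ⟨p, hp, hTp⟩
    rcases mem_wY_iff.1 hi1 with ⟨q, hq, hTq⟩
    refine ⟨p, hp, q, hq, hTp, hTq, ?_⟩
    rw [← hTq] at hlt; rw [← hTp] at hlt
    exact (indexOf_wY_lt_iff hinj hq hp).1 hlt
  · rintro ⟨p, hp, q, hq, hTp, hTq, hqp⟩
    refine ⟨mem_wY_iff.2 ⟨p, hp, hTp⟩, mem_wY_iff.2 ⟨q, hq, hTq⟩, ?_⟩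
    have := indexOf_wY_lt hinj hq hp hqp
    rw [hTp, hTq] at this
    exact this

end PosLemmas

open scoped Classical

lemma mem_cd_iff' {α : List ℕ} {c r : ℕ} :
    (c, r) ∈ cd α ↔ 1 ≤ c ∧ c ≤ part α r ∧ 1 ≤ r ∧ r ≤ α.length := mem_cd_iff

section RowLen

variable {α : List ℕ} {T : ℕ × ℕ → ℕ}

/-- number of boxes in row `r` with entry `≤ k` -/
noncomputable def rowLen (α : List ℕ) (T : ℕ × ℕ → ℕ) (r k : ℕ) : ℕ :=
  ((cd α).filter fun p => p.2 = r ∧ T p ≤ k).card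

lemma aux_downclosed_eq_Icc {S : Finset ℕ} (h0 : 0 ∉ S)
    (hdc : ∀ c ∈ S, ∀ c', 1 ≤ c' → c' ≤ c → c' ∈ S) : S = Finset.Icc 1 S.card := by
  rcases S.eq_empty_or_nonempty with rfl | hne
  · simp
  · have hmax := S.max'_mem hne
    have hS : S = Finset.Icc 1 (S.max' hne) := by
      apply Finset.ext
      intro x
      rw [Finset.mem_Icc]
      constructor
      · intro hx
        refine ⟨?_, S.le_max' x hx⟩
        rcases Nat.eq_zero_or_pos x with rfl | h
        · exact absurd hx h0
        · exact h
      · rintro ⟨h1, h2⟩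
        exact hdc _ hmax x h1 h2
    have hcard : S.card = S.max' hne := by
      conv_lhs => rw [hS]
      rw [Nat.card_Icc]
      omega
    rw [hcard]
    exact hS

lemma row_filter_eq_image {r k : ℕ} :
    ((cd α).filter fun p => p.2 = r ∧ T p ≤ k) =
      (Finset.filter (fun c => (c, r) ∈ cd α ∧ T (c, r) ≤ k) (Finset.Icc 1 (part α r))).image
        (fun c => (c, r)) := by
  apply Finset.ext
  rintro ⟨a, b⟩
  simp only [Finset.mem_filter, Finset.mem_image, Finset.mem_Icc]
  constructor
  · rintro ⟨hcd, rfl, hT⟩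
    rcases mem_cd_iff.1 hcd with ⟨h1, h2, _, _⟩
    exact ⟨a, ⟨⟨h1, h2⟩, hcd, hT⟩, rfl⟩
  · rintro ⟨c, ⟨⟨h1, h2⟩, hcd, hT⟩, heq⟩
    obtain ⟨rfl, rfl⟩ : c = a ∧ r = b := by
      constructor <;> [exact congrArg Prod.fst heq; exact congrArg Prod.snd heq]
    exact ⟨hcd, rfl, hT⟩

lemma rowLen_eq_card_colset {r k : ℕ} :
    rowLen α T r k =
      (Finset.filter (fun c => (c, r) ∈ cd α ∧ T (c, r) ≤ k) (Finset.Icc 1 (part α r))).card := by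
  unfold rowLen
  rw [row_filter_eq_image]
  exact Finset.card_image_of_injective _ (fun x y h => congrArg Prod.fst h)

/-- prefix characterization of row lengths, for rows-increasing fillings -/
lemma rowLen_le_iff (hRI : RowsIncrease α T) {c r k : ℕ} (hc : (c, r) ∈ cd α) :
    T (c, r) ≤ k ↔ c ≤ rowLen α T r k := by
  set S := Finset.filter (fun c => (c, r) ∈ cd α ∧ T (c, r) ≤ k) (Finset.Icc 1 (part α r))
    with hSdef
  have h0 : 0 ∉ S := by
    intro h
    rw [hSdef, Finset.mem_filter, Finset.mem_Icc] at h
    omega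
  have hmono : ∀ c c', 1 ≤ c' → c' ≤ c → (c, r) ∈ cd α → T (c', r) ≤ T (c, r) := by
    intro c c' h1 h2 hcd
    obtain ⟨d, rfl⟩ : ∃ d, c' + d = c := ⟨c - c', by omega⟩
    clear h2
    induction d with
    | zero => exact le_refl _
    | succ m ih =>
      have hcd' : (c' + m, r) ∈ cd α := by
        rcases mem_cd_iff'.1 hcd with ⟨ha, hb, hc', hd⟩
        exact mem_cd_iff'.2 ⟨by omega, by omega, hc', hd⟩
      refine le_trans (ih hcd') (le_of_lt ?_)
      have := hRI (c' + m) r hcd' (by rw [show c' + m + 1 = c' + (m+1) by omega]; exact hcd)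
      rw [show c' + m + 1 = c' + (m+1) by omega] at this
      exact this
  have hdc : ∀ x ∈ S, ∀ c', 1 ≤ c' → c' ≤ x → c' ∈ S := by
    intro x hx c' h1 h2
    rw [hSdef, Finset.mem_filter, Finset.mem_Icc] at hx ⊢
    rcases hx with ⟨⟨hx1, hx2⟩, hxcd, hxT⟩
    have hccd : (c', r) ∈ cd α := by
      rcases mem_cd_iff'.1 hxcd with ⟨_, hb, hc', hd⟩
      exact mem_cd_iff'.2 ⟨h1, by omega, hc', hd⟩
    exact ⟨⟨h1, by omega⟩, hccd, le_trans (hmono x c' h1 h2 hxcd) hxT⟩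
  have hIcc := aux_downclosed_eq_Icc h0 hdc
  rw [rowLen_eq_card_colset]
  constructor
  · intro hT
    have hcS : c ∈ S := by
      rw [hSdef, Finset.mem_filter, Finset.mem_Icc]
      rcases mem_cd_iff'.1 hc with ⟨h1, h2, _, _⟩
      exact ⟨⟨h1, h2⟩, hc, hT⟩
    rw [hIcc, Finset.mem_Icc] at hcS
    exact hcS.2
  · intro hle
    have hcS : c ∈ S := by
      rw [hIcc, Finset.mem_Icc]
      rcases mem_cd_iff'.1 hc with ⟨h1, _, _, _⟩
      exact ⟨h1, hle⟩
    rw [hSdef, Finset.mem_filter] at hcS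
    exact hcS.2.2

lemma rowLen_le_part {r k : ℕ} : rowLen α T r k ≤ part α r := by
  rw [rowLen_eq_card_colset]
  calc _ ≤ (Finset.Icc 1 (part α r)).card := Finset.card_le_card (Finset.filter_subset _ _)
  _ = part α r := by rw [Nat.card_Icc]; omega

lemma rowLen_eq_zero_of_gt {r k : ℕ} (h : α.length < r) : rowLen α T r k = 0 := by
  unfold rowLen
  rw [Finset.card_eq_zero, Finset.filter_eq_empty_iff]
  rintro p hp ⟨rfl, _⟩
  rcases mem_cd_iff.1 hp with ⟨_, _, _, h4⟩
  omega

lemma rowLen_mono (α : List ℕ) (T : ℕ × ℕ → ℕ) (r : ℕ) {k k' : ℕ} (h : k ≤ k') :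
    rowLen α T r k ≤ rowLen α T r k' := by
  unfold rowLen
  apply Finset.card_le_card
  intro p hp
  rw [Finset.mem_filter] at hp ⊢
  exact ⟨hp.1, hp.2.1, le_trans hp.2.2 h⟩

lemma rowLen_zero (hSF : IsStandardFilling α T) (r : ℕ) : rowLen α T r 0 = 0 := by
  unfold rowLen
  rw [Finset.card_eq_zero, Finset.filter_eq_empty_iff]
  rintro p hp ⟨_, hT⟩
  have := (hSF.1.1 hp).1
  omega

lemma rowLen_top (hSF : IsStandardFilling α T) {r k : ℕ} (hk : α.sum ≤ k) :
    rowLen α T r k = part α r * (if 1 ≤ r ∧ r ≤ α.length then 1 else 0) := by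
  by_cases hr : 1 ≤ r ∧ r ≤ α.length
  · rw [if_pos hr, mul_one, rowLen_eq_card_colset]
    have : Finset.filter (fun c => (c, r) ∈ cd α ∧ T (c, r) ≤ k) (Finset.Icc 1 (part α r)) =
        Finset.Icc 1 (part α r) := by
      rw [Finset.filter_eq_self]
      intro c hcI
      rw [Finset.mem_Icc] at hcI
      have hcd : (c, r) ∈ cd α := mem_cd_iff.2 ⟨hcI.1, hcI.2, hr.1, hr.2⟩
      exact ⟨hcd, le_trans (hSF.1.1 hcd).2 hk⟩
    rw [this, Nat.card_Icc]
    omega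
  · rw [if_neg hr, mul_zero]
    unfold rowLen
    rw [Finset.card_eq_zero, Finset.filter_eq_empty_iff]
    rintro p hp ⟨rfl, _⟩
    rcases mem_cd_iff.1 hp with ⟨_, _, h3, h4⟩
    exact hr ⟨h3, h4⟩

lemma rowLen_succ_of_ne (hinj : InjCd α T) {q : ℕ × ℕ} (hq : q ∈ cd α) {m : ℕ}
    (hTq : T q = m + 1) {r : ℕ} (hr : q.2 ≠ r) :
    rowLen α T r (m + 1) = rowLen α T r m := by
  unfold rowLen
  congr 1
  apply Finset.ext
  intro p
  simp only [Finset.mem_filter]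
  constructor
  · rintro ⟨hp, rfl, hT⟩
    refine ⟨hp, rfl, ?_⟩
    rcases Nat.lt_or_ge (T p) (m + 1) with h | h
    · omega
    · have : T p = m + 1 := by omega
      have : p = q := hinj p hp q hq (this.trans hTq.symm)
      subst this
      exact absurd rfl hr
  · rintro ⟨hp, rfl, hT⟩
    exact ⟨hp, rfl, by omega⟩

lemma rowLen_succ_self (hinj : InjCd α T) {q : ℕ × ℕ} (hq : q ∈ cd α) {m : ℕ}
    (hTq : T q = m + 1) :
    rowLen α T q.2 (m + 1) = rowLen α T q.2 m + 1 := by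
  unfold rowLen
  have hset : ((cd α).filter fun p => p.2 = q.2 ∧ T p ≤ m + 1) =
      insert q ((cd α).filter fun p => p.2 = q.2 ∧ T p ≤ m) := by
    apply Finset.ext
    intro p
    simp only [Finset.mem_filter, Finset.mem_insert]
    constructor
    · rintro ⟨hp, hr, hT⟩
      rcases Nat.lt_or_ge (T p) (m + 1) with h | h
      · exact Or.inr ⟨hp, hr, by omega⟩
      · exact Or.inl (hinj p hp q hq (by omega))
    · rintro (rfl | ⟨hp, hr, hT⟩)
      · exact ⟨hq, rfl, by omega⟩
      · exact ⟨hp, hr, by omega⟩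
  rw [hset, Finset.card_insert_of_notMem]
  rw [Finset.mem_filter]
  rintro ⟨_, _, hT⟩
  omega

lemma rowLen_succ_le (hinj : InjCd α T) (r m : ℕ) :
    rowLen α T r (m + 1) ≤ rowLen α T r m + 1 := by
  by_cases hex : ∃ q ∈ cd α, T q = m + 1
  · rcases hex with ⟨q, hq, hTq⟩
    by_cases hr : q.2 = r
    · subst hr
      rw [rowLen_succ_self hinj hq hTq]
    · rw [rowLen_succ_of_ne hinj hq hTq hr]
      omega
  · have : rowLen α T r (m + 1) = rowLen α T r m := by
      unfold rowLen
      congr 1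
      apply Finset.ext
      intro p
      simp only [Finset.mem_filter]
      constructor
      · rintro ⟨hp, hr, hT⟩
        refine ⟨hp, hr, ?_⟩
        rcases Nat.lt_or_ge (T p) (m + 1) with h | h
        · omega
        · exact absurd ⟨p, hp, by omega⟩ hex
      · rintro ⟨hp, hr, hT⟩
        exact ⟨hp, hr, by omega⟩
    omega

/-- the column of the box containing `k`: if `T q = k` with `q ∈ cd α`, then the
row of `q` has length exactly `q.1` at time `k`. -/
lemma rowLen_at_entry (hRI : RowsIncrease α T) {c r : ℕ} (hq : (c, r) ∈ cd α) {k : ℕ}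
    (hTq : T (c, r) = k) : rowLen α T r k = c := by
  have h1 : c ≤ rowLen α T r k := (rowLen_le_iff hRI hq).1 (le_of_eq hTq)
  rcases Nat.lt_or_ge (rowLen α T r k) (c + 1) with h | h
  · omega
  · exfalso
    have hcd1 : (c + 1, r) ∈ cd α := by
      rcases mem_cd_iff'.1 hq with ⟨ha, hb, hc2, hd⟩
      refine mem_cd_iff'.2 ⟨by omega, ?_, hc2, hd⟩
      calc c + 1 ≤ rowLen α T r k := h
      _ ≤ part α r := rowLen_le_part
    have hTle : T (c + 1, r) ≤ k := (rowLen_le_iff hRI hcd1).2 h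
    have hlt := hRI c r hq hcd1
    omega

end RowLen

section PeakRL

variable {α : List ℕ} {T : ℕ × ℕ → ℕ}

/-- row-length formulation of the peak condition -/
def PeakRL (α : List ℕ) (T : ℕ × ℕ → ℕ) : Prop :=
  ∀ k, 1 ≤ k → k ≤ α.sum → ∀ r, 1 ≤ r →
    (∃ r', r < r' ∧ 1 ≤ rowLen α T r' k) → 2 ≤ rowLen α T r k

lemma part_eq_zero_of_gt {β : List ℕ} {r : ℕ} (h : β.length < r) : part β r = 0 := by
  unfold part
  exact List.getD_eq_default _ _ (by omega)

lemma rowLen_of_filter_eq {β : List ℕ} {k : ℕ}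
    (h : (cd α).filter (fun p => T p ≤ k) = cd β) {r : ℕ} (hr : 1 ≤ r) :
    rowLen α T r k = part β r := by
  have hset : ((cd α).filter fun p => p.2 = r ∧ T p ≤ k) = (cd β).filter fun p => p.2 = r := by
    apply Finset.ext
    intro p
    have hmem : p ∈ cd β ↔ p ∈ cd α ∧ T p ≤ k := by
      rw [← h, Finset.mem_filter]
    rw [Finset.mem_filter, Finset.mem_filter, hmem]
    tauto
  unfold rowLen
  rw [hset]
  have himg : (cd β).filter (fun p => p.2 = r) =
      (Finset.Icc 1 (part β r)).image (fun c => (c, r)) := by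
    apply Finset.ext
    rintro ⟨a, b⟩
    simp only [Finset.mem_filter, Finset.mem_image, Finset.mem_Icc]
    constructor
    · rintro ⟨hcd, rfl⟩
      rcases mem_cd_iff.1 hcd with ⟨h1, h2, _, _⟩
      exact ⟨a, ⟨h1, h2⟩, rfl⟩
    · rintro ⟨c, ⟨h1, h2⟩, heq⟩
      obtain ⟨rfl, rfl⟩ : c = a ∧ r = b := by
        constructor <;> [exact congrArg Prod.fst heq; exact congrArg Prod.snd heq]
      have hrlen : r ≤ β.length := by
        by_contra hlen
        have := part_eq_zero_of_gt (β := β) (r := r) (by omega)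
        omega
      exact ⟨mem_cd_iff'.2 ⟨h1, h2, hr, hrlen⟩, rfl⟩
  rw [himg, Finset.card_image_of_injective _ (fun x y hxy => congrArg Prod.fst hxy),
    Nat.card_Icc]
  omega

lemma peakRL_of_peakCond (hpc : PeakCond α T) : PeakRL α T := by
  rintro k hk1 hk2 r hr ⟨r', hrr', hpos⟩
  rcases hpc k hk1 hk2 with ⟨β, ⟨⟨hbpos, hbsum⟩, hbpeak⟩, hfil⟩
  rw [rowLen_of_filter_eq hfil hr]
  rw [rowLen_of_filter_eq hfil (by omega : 1 ≤ r')] at hpos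
  have hr'len : r' ≤ β.length := by
    by_contra hlen
    have := part_eq_zero_of_gt (β := β) (r := r') (by omega)
    omega
  have h2 := hbpeak (r - 1) (by omega)
  unfold part
  omega

/-- The number of boxes with entries `≤ k` is `k`. -/
lemma card_filter_le (hSF : IsStandardFilling α T) {k : ℕ} (hk : k ≤ α.sum) :
    ((cd α).filter fun p => T p ≤ k).card = k := by
  have : ((cd α).filter fun p => T p ≤ k).card = (Finset.Icc 1 k).card := by
    apply Finset.card_bij (fun p _ => T p)
    · rintro p hp
      rw [Finset.mem_filter] at hp
      have := (hSF.1.1 hp.1).1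
      rw [Finset.mem_Icc]
      exact ⟨this, hp.2⟩
    · intro p hp q hq hpq
      rw [Finset.mem_filter] at hp hq
      exact hSF.1.2.1 hp.1 hq.1 hpq
    · intro v hv
      rw [Finset.mem_Icc] at hv
      have hvs : v ∈ Set.Icc 1 α.sum := ⟨hv.1, le_trans hv.2 hk⟩
      rcases hSF.1.2.2 hvs with ⟨p, hp, hTp⟩
      refine ⟨p, Finset.mem_filter.2 ⟨hp, ?_⟩, hTp⟩
      rw [hTp]; exact hv.2
  rw [this, Nat.card_Icc]
  omega

lemma sum_Icc_shift (f : ℕ → ℕ) (N : ℕ) :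
    ∑ r ∈ Finset.Icc 1 N, f r = ∑ i ∈ Finset.range N, f (i + 1) := by
  induction N with
  | zero => simp
  | succ m ih =>
    rw [Finset.sum_range_succ, ← ih, show Finset.Icc 1 (m + 1) = insert (m + 1) (Finset.Icc 1 m) by
      apply Finset.ext; intro x; rw [Finset.mem_insert, Finset.mem_Icc, Finset.mem_Icc]; omega]
    rw [Finset.sum_insert (by rw [Finset.mem_Icc]; omega)]
    omega

lemma sum_rowLen (hSF : IsStandardFilling α T) {k : ℕ} (hk : k ≤ α.sum) :
    ∑ r ∈ Finset.Icc 1 α.length, rowLen α T r k = k := by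
  have h2 : ((cd α).filter fun p => T p ≤ k).card =
      ∑ r ∈ Finset.Icc 1 α.length, rowLen α T r k := by
    rw [Finset.card_eq_sum_card_fiberwise (f := Prod.snd) (t := Finset.Icc 1 α.length)]
    · apply Finset.sum_congr rfl
      intro r _
      unfold rowLen
      congr 1
      rw [Finset.filter_filter]
      apply Finset.filter_congr
      intro p _
      constructor
      · rintro ⟨h1, h2⟩; exact ⟨h2, h1⟩
      · rintro ⟨h1, h2⟩; exact ⟨h2, h1⟩
    · intro p hp
      rw [Finset.mem_coe, Finset.mem_filter] at hp
      rcases mem_cd_iff.1 hp.1 with ⟨_, _, h3, h4⟩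
      rw [Finset.mem_coe, Finset.mem_Icc]
      exact ⟨h3, h4⟩
  rw [← h2, card_filter_le hSF hk]

lemma peakCond_of_peakRL (hSF : IsStandardFilling α T) (hRI : RowsIncrease α T)
    (hrl : PeakRL α T) : PeakCond α T := by
  intro k hk1 hk2
  classical
  set M := Nat.findGreatest (fun r => 1 ≤ rowLen α T r k) α.length with hM
  have hMle : M ≤ α.length := Nat.findGreatest_le _
  have hMrow : ∀ r, r ≤ α.length → 1 ≤ rowLen α T r k → r ≤ M :=
    fun r hrl' hpos => Nat.le_findGreatest hrl' hpos
  -- a witness row: the row of entry 1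
  obtain ⟨r₀, hr₀1, hr₀len, hr₀pos⟩ :
      ∃ r₀, 1 ≤ r₀ ∧ r₀ ≤ α.length ∧ 1 ≤ rowLen α T r₀ k := by
    have h1 : (1 : ℕ) ∈ Set.Icc 1 α.sum := ⟨le_refl _, by omega⟩
    rcases hSF.1.2.2 h1 with ⟨p, hp, hTp⟩
    obtain ⟨c, r⟩ := p
    have hp' : (c, r) ∈ cd α := hp
    rcases mem_cd_iff'.1 hp' with ⟨_, _, h3, h4⟩
    refine ⟨r, h3, h4, ?_⟩
    have := (rowLen_le_iff hRI hp').1 (show T (c, r) ≤ k by omega)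
    omega
  have hMpos : 1 ≤ rowLen α T M k :=
    Nat.findGreatest_spec (P := fun r => 1 ≤ rowLen α T r k) hr₀len hr₀pos
  have hM1 : 1 ≤ M := hMrow r₀ hr₀len hr₀pos |>.trans' hr₀1
  have hzero : ∀ r, M < r → rowLen α T r k = 0 := by
    intro r hr
    rcases Nat.lt_or_ge α.length r with h | h
    · exact rowLen_eq_zero_of_gt h
    · by_contra hne
      have := hMrow r h (by omega)
      omega
  have hroweq : ∀ r, 1 ≤ r → r ≤ M → 1 ≤ rowLen α T r k := by
    intro r h1 h2
    rcases Nat.lt_or_ge r M with h | h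
    · have := hrl k hk1 hk2 r h1 ⟨M, h, hMpos⟩
      omega
    · have : r = M := by omega
      subst this
      exact hMpos
  refine ⟨List.ofFn (fun i : Fin M => rowLen α T (i + 1) k), ⟨⟨?_, ?_⟩, ?_⟩, ?_⟩
  · intro a ha
    rw [List.mem_ofFn] at ha
    rcases ha with ⟨i, rfl⟩
    exact hroweq (i + 1) (by omega) (by omega)
  · rw [List.sum_ofFn]
    have hfin := Fin.sum_univ_eq_sum_range (fun j => rowLen α T (j + 1) k) M
    rw [hfin, ← sum_Icc_shift (fun r => rowLen α T r k) M]
    have hsplit : Finset.Icc 1 α.length = Finset.Icc 1 M ∪ Finset.Icc (M + 1) α.length := by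
      apply Finset.ext; intro x
      rw [Finset.mem_union, Finset.mem_Icc, Finset.mem_Icc, Finset.mem_Icc]
      omega
    have hdisj : Disjoint (Finset.Icc 1 M) (Finset.Icc (M + 1) α.length) := by
      rw [Finset.disjoint_left]
      intro a ha hb
      rw [Finset.mem_Icc] at ha hb
      omega
    have hz : ∑ r ∈ Finset.Icc (M + 1) α.length, rowLen α T r k = 0 := by
      apply Finset.sum_eq_zero
      intro r hrm
      rw [Finset.mem_Icc] at hrm
      exact hzero r (by omega)
    have htot := sum_rowLen hSF hk2
    rw [hsplit, Finset.sum_union hdisj] at htot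
    omega
  · intro i hi
    rw [List.length_ofFn] at hi
    have hgd : (List.ofFn (fun i : Fin M => rowLen α T (i + 1) k)).getD i 0 =
        rowLen α T (i + 1) k := by
      rw [List.getD_eq_getElem _ _ (by rw [List.length_ofFn]; omega), List.getElem_ofFn]
    rw [hgd]
    have := hrl k hk1 hk2 (i + 1) (by omega) ⟨M, by omega, hMpos⟩
    omega
  · apply Finset.ext
    rintro ⟨c, r⟩
    rw [Finset.mem_filter]
    have hlen : (List.ofFn (fun i : Fin M => rowLen α T (i + 1) k)).length = M :=
      List.length_ofFn
    have hpart : ∀ rr, 1 ≤ rr → rr ≤ M →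
        part (List.ofFn (fun i : Fin M => rowLen α T (i + 1) k)) rr = rowLen α T rr k := by
      intro rr h1 h2
      unfold part
      rw [List.getD_eq_getElem _ _ (by rw [hlen]; omega), List.getElem_ofFn]
      show rowLen α T (rr - 1 + 1) k = rowLen α T rr k
      congr 1
      omega
    constructor
    · rintro ⟨hcd, hT⟩
      rcases mem_cd_iff'.1 hcd with ⟨h1, h2, h3, h4⟩
      have hc : c ≤ rowLen α T r k := (rowLen_le_iff hRI hcd).1 hT
      have hrM : r ≤ M := hMrow r h4 (by omega)
      exact mem_cd_iff'.2 ⟨h1, by rw [hpart r h3 hrM]; exact hc, h3, by omega⟩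
    · intro hcd
      rcases mem_cd_iff'.1 hcd with ⟨h1, h2, h3, h4⟩
      rw [hlen] at h4
      rw [hpart r h3 h4] at h2
      have hcda : (c, r) ∈ cd α := by
        refine mem_cd_iff'.2 ⟨h1, le_trans h2 rowLen_le_part, h3, by omega⟩
      exact ⟨hcda, (rowLen_le_iff hRI hcda).2 h2⟩

end PeakRL

section Collision

variable {α : List ℕ} {T : ℕ × ℕ → ℕ}

/-- a collision at time `k`: two rows with equal positive lengths -/
def Coll (α : List ℕ) (T : ℕ × ℕ → ℕ) (k : ℕ) : Prop :=
  ∃ r r', r < r' ∧ 1 ≤ rowLen α T r' k ∧ rowLen α T r k = rowLen α T r' k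

def HasColl (α : List ℕ) (T : ℕ × ℕ → ℕ) : Prop := ∃ k, k ≤ α.sum ∧ Coll α T k

lemma coll_iff_ne {k : ℕ} :
    Coll α T k ↔ ∃ r r', r ≠ r' ∧ 1 ≤ rowLen α T r' k ∧ rowLen α T r k = rowLen α T r' k := by
  constructor
  · rintro ⟨r, r', h1, h2, h3⟩
    exact ⟨r, r', by omega, h2, h3⟩
  · rintro ⟨r, r', h1, h2, h3⟩
    rcases Nat.lt_or_ge r r' with h | h
    · exact ⟨r, r', h, h2, h3⟩
    · exact ⟨r', r, by omega, by omega, h3.symm⟩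

/-- the property that row `r` is the lower row of a collision at time `k` -/
def CollP (α : List ℕ) (T : ℕ × ℕ → ℕ) (k r : ℕ) : Prop :=
  ∃ r', r < r' ∧ 1 ≤ rowLen α T r' k ∧ rowLen α T r k = rowLen α T r' k

noncomputable def ctime (α : List ℕ) (T : ℕ × ℕ → ℕ) : ℕ :=
  Nat.findGreatest (Coll α T) α.sum

noncomputable def rowj (α : List ℕ) (T : ℕ × ℕ → ℕ) : ℕ :=
  if h : ∃ r, CollP α T (ctime α T) r then Nat.find h else 0

noncomputable def rowj' (α : List ℕ) (T : ℕ × ℕ → ℕ) : ℕ :=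
  if h : CollP α T (ctime α T) (rowj α T) then Nat.find h else 0

noncomputable def colL (α : List ℕ) (T : ℕ × ℕ → ℕ) : ℕ :=
  rowLen α T (rowj α T) (ctime α T)

def swapRow (j j' r : ℕ) : ℕ := if r = j then j' else if r = j' then j else r

lemma swapRow_invol (j j' r : ℕ) : swapRow j j' (swapRow j j' r) = r := by
  unfold swapRow
  by_cases h1 : r = j <;> by_cases h2 : r = j' <;> simp [h1, h2] <;> omega

/-- the box relabeling underlying the surgery -/
noncomputable def boxMap (α : List ℕ) (T : ℕ × ℕ → ℕ) (p : ℕ × ℕ) : ℕ × ℕ :=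
  if p.1 ≤ colL α T then p else (p.1, swapRow (rowj α T) (rowj' α T) p.2)

noncomputable def surgA (α : List ℕ) (T : ℕ × ℕ → ℕ) : List ℕ :=
  List.ofFn (fun i : Fin α.length => part α (swapRow (rowj α T) (rowj' α T) (i + 1)))

noncomputable def surgT (α : List ℕ) (T : ℕ × ℕ → ℕ) : ℕ × ℕ → ℕ :=
  fun p => T (boxMap α T p)

lemma coll_ctime (hc : HasColl α T) : Coll α T (ctime α T) := by
  rcases hc with ⟨k, hk, hck⟩
  exact Nat.findGreatest_spec hk hck

lemma ctime_le : ctime α T ≤ α.sum := Nat.findGreatest_le _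

lemma le_ctime {k : ℕ} (hk : k ≤ α.sum) (h : Coll α T k) : k ≤ ctime α T :=
  Nat.le_findGreatest hk h

lemma ctime_pos (hSF : IsStandardFilling α T) (hc : HasColl α T) : 1 ≤ ctime α T := by
  by_contra h
  have h0 : ctime α T = 0 := by omega
  rcases coll_ctime hc with ⟨r, r', _, hpos, _⟩
  rw [h0, rowLen_zero hSF] at hpos
  omega

lemma rowLen_zero_row {k : ℕ} : rowLen α T 0 k = 0 := by
  unfold rowLen
  rw [Finset.card_eq_zero, Finset.filter_eq_empty_iff]
  rintro p hp ⟨h0, _⟩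
  rcases mem_cd_iff.1 hp with ⟨_, _, h3, _⟩
  omega

section Spec

variable (hc : HasColl α T)
include hc

lemma rowj_spec : CollP α T (ctime α T) (rowj α T) := by
  have hex : ∃ r, CollP α T (ctime α T) r := by
    rcases coll_ctime hc with ⟨r, r', h1, h2, h3⟩
    exact ⟨r, r', h1, h2, h3⟩
  unfold rowj
  rw [dif_pos hex]
  exact Nat.find_spec hex

lemma rowj_min {r : ℕ} (h : CollP α T (ctime α T) r) : rowj α T ≤ r := by
  have hex : ∃ r, CollP α T (ctime α T) r := ⟨r, h⟩
  unfold rowj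
  rw [dif_pos hex]
  exact Nat.find_min' hex h

lemma rowj'_gt : rowj α T < rowj' α T := by
  unfold rowj'
  rw [dif_pos (rowj_spec hc)]
  exact (Nat.find_spec (rowj_spec hc)).1

lemma rowj'_len : 1 ≤ rowLen α T (rowj' α T) (ctime α T) := by
  unfold rowj'
  rw [dif_pos (rowj_spec hc)]
  exact (Nat.find_spec (rowj_spec hc)).2.1

lemma rowj'_eq : rowLen α T (rowj α T) (ctime α T) = rowLen α T (rowj' α T) (ctime α T) := by
  unfold rowj'
  rw [dif_pos (rowj_spec hc)]
  exact (Nat.find_spec (rowj_spec hc)).2.2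

lemma rowj'_min {r : ℕ} (h : rowj α T < r) (hpos : 1 ≤ rowLen α T r (ctime α T))
    (heq : rowLen α T (rowj α T) (ctime α T) = rowLen α T r (ctime α T)) :
    rowj' α T ≤ r := by
  unfold rowj'
  rw [dif_pos (rowj_spec hc)]
  exact Nat.find_min' (rowj_spec hc) ⟨h, hpos, heq⟩

lemma rowj_pos : 1 ≤ rowj α T := by
  by_contra h
  have h0 : rowj α T = 0 := by omega
  have := rowj'_eq hc
  have h2 := rowj'_len hc
  rw [h0, rowLen_zero_row] at this
  omega

lemma colL_pos : 1 ≤ colL α T := by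
  unfold colL
  rw [rowj'_eq hc]
  exact rowj'_len hc

lemma rowj_le_len : rowj α T ≤ α.length := by
  by_contra h
  have := colL_pos hc
  unfold colL at this
  rw [rowLen_eq_zero_of_gt (by omega)] at this
  omega

lemma rowj'_le_len : rowj' α T ≤ α.length := by
  by_contra h
  have := rowj'_len hc
  rw [rowLen_eq_zero_of_gt (by omega)] at this
  omega

lemma colL_ge_two (hSF : IsStandardFilling α T) (hpc : PeakCond α T) : 2 ≤ colL α T := by
  have hrl := peakRL_of_peakCond hpc
  have := hrl (ctime α T) (ctime_pos hSF hc) ctime_le (rowj α T) (rowj_pos hc)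
    ⟨rowj' α T, rowj'_gt hc, rowj'_len hc⟩
  unfold colL
  omega

lemma colL_le_part : colL α T ≤ part α (rowj α T) := rowLen_le_part

lemma colL_le_part' : colL α T ≤ part α (rowj' α T) := by
  unfold colL
  rw [rowj'_eq hc]
  exact rowLen_le_part

end Spec

end Collision

section Surgery

variable {α : List ℕ} {T : ℕ × ℕ → ℕ}

lemma swapRow_eq_of_ne {j j' r : ℕ} (h1 : r ≠ j) (h2 : r ≠ j') : swapRow j j' r = r := by
  unfold swapRow
  rw [if_neg h1, if_neg h2]

lemma length_surgA : (surgA α T).length = α.length := by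
  unfold surgA
  rw [List.length_ofFn]

lemma part_surgA {r : ℕ} (h1 : 1 ≤ r) (h2 : r ≤ α.length) :
    part (surgA α T) r = part α (swapRow (rowj α T) (rowj' α T) r) := by
  unfold surgA part
  rw [List.getD_eq_getElem _ _ (by rw [List.length_ofFn]; omega), List.getElem_ofFn]
  show part α (swapRow (rowj α T) (rowj' α T) (r - 1 + 1)) = _
  rw [show r - 1 + 1 = r by omega]
  rfl

lemma boxMap_invol (p : ℕ × ℕ) : boxMap α T (boxMap α T p) = p := by
  unfold boxMap
  by_cases h : p.1 ≤ colL α T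
  · rw [if_pos h, if_pos h]
  · rw [if_neg h, if_neg h, swapRow_invol]

section WithColl

variable (hc : HasColl α T)
include hc

lemma swapRow_bounds {r : ℕ} :
    (1 ≤ swapRow (rowj α T) (rowj' α T) r ∧ swapRow (rowj α T) (rowj' α T) r ≤ α.length) ↔
      (1 ≤ r ∧ r ≤ α.length) := by
  have h1 := rowj_pos hc
  have h2 := rowj'_gt hc
  have h3 := rowj_le_len hc
  have h4 := rowj'_le_len hc
  unfold swapRow
  split_ifs with ha hb <;> omega

lemma cd_surgA_iff {c r : ℕ} :
    (c, r) ∈ cd (surgA α T) ↔ (c, swapRow (rowj α T) (rowj' α T) r) ∈ cd α := by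
  have h1 := rowj_pos hc
  have h2 := rowj'_gt hc
  have h3 := rowj_le_len hc
  have h4 := rowj'_le_len hc
  rw [mem_cd_iff', mem_cd_iff', length_surgA]
  by_cases hr : 1 ≤ r ∧ r ≤ α.length
  · rw [part_surgA hr.1 hr.2]
    have hsw : 1 ≤ swapRow (rowj α T) (rowj' α T) r ∧
        swapRow (rowj α T) (rowj' α T) r ≤ α.length := (swapRow_bounds hc).2 hr
    constructor
    · rintro ⟨u1, u2, _, _⟩; exact ⟨u1, u2, hsw.1, hsw.2⟩
    · rintro ⟨u1, u2, _, _⟩; exact ⟨u1, u2, hr.1, hr.2⟩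
  · have hswr : swapRow (rowj α T) (rowj' α T) r = r := by
      unfold swapRow
      split_ifs with ha hb <;> omega
    rw [hswr]
    constructor
    · rintro ⟨_, _, u3, u4⟩; exact absurd ⟨u3, u4⟩ hr
    · rintro ⟨_, _, u3, u4⟩; exact absurd ⟨u3, u4⟩ hr

lemma cd_alpha_low_iff {c r : ℕ} (h0 : 1 ≤ c) (hcl : c ≤ colL α T) :
    (c, r) ∈ cd α ↔ (c, swapRow (rowj α T) (rowj' α T) r) ∈ cd α := by
  have h1 := rowj_pos hc
  have h2 := rowj'_gt hc
  have h3 := rowj_le_len hc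
  have h4 := rowj'_le_len hc
  have h5 := colL_le_part (α := α) (T := T) hc
  have h6 := colL_le_part' hc
  unfold swapRow
  split_ifs with ha hb
  · subst ha
    rw [mem_cd_iff', mem_cd_iff']
    constructor
    · rintro _; exact ⟨h0, by omega, by omega, by omega⟩
    · rintro _; exact ⟨h0, by omega, by omega, by omega⟩
  · subst hb
    rw [mem_cd_iff', mem_cd_iff']
    constructor
    · rintro _; exact ⟨h0, by omega, by omega, by omega⟩
    · rintro _; exact ⟨h0, by omega, by omega, by omega⟩
  · exact Iff.rfl

lemma cd_surg_low {c r : ℕ} (h0 : 1 ≤ c) (hcl : c ≤ colL α T) :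
    (c, r) ∈ cd (surgA α T) ↔ (c, r) ∈ cd α := by
  rw [cd_surgA_iff hc, ← cd_alpha_low_iff hc h0 hcl]

/-- entries in the swapped rows, low columns, are `≤ ctime` -/
lemma T_le_ctime (hRI : RowsIncrease α T) {c r : ℕ}
    (hr : r = rowj α T ∨ r = rowj' α T) (hcd : (c, r) ∈ cd α) (hcl : c ≤ colL α T) :
    T (c, r) ≤ ctime α T := by
  rw [rowLen_le_iff hRI hcd]
  rcases hr with rfl | rfl
  · exact hcl
  · rw [← rowj'_eq hc]
    exact hcl

/-- entries in the swapped rows, high columns, are `> ctime` -/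
lemma T_gt_ctime (hRI : RowsIncrease α T) {c r : ℕ}
    (hr : r = rowj α T ∨ r = rowj' α T) (hcd : (c, r) ∈ cd α) (hcl : colL α T < c) :
    ctime α T < T (c, r) := by
  by_contra h
  push_neg at h
  have := (rowLen_le_iff hRI hcd).1 h
  rcases hr with rfl | rfl
  · unfold colL at hcl; omega
  · rw [← rowj'_eq hc] at this
    unfold colL at hcl
    omega

lemma boxMap_mem_cd {p : ℕ × ℕ} (hp : p ∈ cd (surgA α T)) : boxMap α T p ∈ cd α := by
  obtain ⟨c, r⟩ := p
  unfold boxMap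
  by_cases h : c ≤ colL α T
  · rw [if_pos h]
    have h0 : 1 ≤ c := (mem_cd_iff.1 hp).1
    exact (cd_surg_low hc h0 h).1 hp
  · rw [if_neg h]
    exact (cd_surgA_iff hc).1 hp

lemma boxMap_mem_cd_rev {p : ℕ × ℕ} (hp : p ∈ cd α) : boxMap α T p ∈ cd (surgA α T) := by
  obtain ⟨c, r⟩ := p
  unfold boxMap
  by_cases h : c ≤ colL α T
  · rw [if_pos h]
    have h0 : 1 ≤ c := (mem_cd_iff.1 hp).1
    exact (cd_surg_low hc h0 h).2 hp
  · rw [if_neg h]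
    rw [cd_surgA_iff hc, swapRow_invol]
    exact hp

lemma perm_surgA : (surgA α T).Perm α := by
  have h1 := rowj_pos hc
  have h2 := rowj'_gt hc
  have h3 := rowj_le_len hc
  have h4 := rowj'_le_len hc
  have hswb : ∀ i : Fin α.length,
      swapRow (rowj α T) (rowj' α T) (i + 1) - 1 < α.length := by
    intro i
    have := (swapRow_bounds hc (r := (i : ℕ) + 1)).2 ⟨by omega, by omega⟩
    omega
  set σ : Fin α.length → Fin α.length :=
    fun i => ⟨swapRow (rowj α T) (rowj' α T) (i + 1) - 1, hswb i⟩ with hσ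
  have hσinv : ∀ i, σ (σ i) = i := by
    intro i
    apply Fin.ext
    rw [hσ]
    simp only
    have hb := (swapRow_bounds hc (r := (i : ℕ) + 1)).2 ⟨by omega, by omega⟩
    have : swapRow (rowj α T) (rowj' α T) (i + 1) - 1 + 1 =
        swapRow (rowj α T) (rowj' α T) (i + 1) := by omega
    rw [this, swapRow_invol]
    omega
  have hmain : surgA α T = (List.ofFn σ).map (fun i : Fin α.length => α.get i) := by
    rw [List.map_ofFn]
    unfold surgA
    congr 1
    funext i
    show part α (swapRow (rowj α T) (rowj' α T) (↑i + 1)) = α.get (σ i)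
    unfold part
    rw [List.get_eq_getElem, List.getD_eq_getElem _ _ (hswb i)]
  rw [hmain]
  have hperm : (List.ofFn σ).Perm (List.ofFn (fun i : Fin α.length => i)) := by
    apply (List.perm_ext_iff_of_nodup ?_ ?_).2
    · intro a
      rw [List.mem_ofFn, List.mem_ofFn]
      constructor
      · rintro ⟨i, rfl⟩; exact ⟨σ i, rfl⟩
      · rintro ⟨i, rfl⟩; exact ⟨σ i, hσinv i⟩
    · apply List.nodup_ofFn.2
      intro i j hij
      have := congrArg σ hij
      rw [hσinv, hσinv] at this
      exact this
    · apply List.nodup_ofFn.2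
      intro i j hij
      exact hij
  have := hperm.map (fun i : Fin α.length => α.get i)
  refine this.trans ?_
  rw [show (List.ofFn (fun i : Fin α.length => i)).map (fun i : Fin α.length => α.get i) =
      List.ofFn (fun i : Fin α.length => α.get i) by rw [List.map_ofFn]; rfl]
  rw [List.ofFn_get]

lemma sum_surgA : (surgA α T).sum = α.sum := (perm_surgA hc).sum_eq

lemma surg_SF (hSF : IsStandardFilling α T) : IsStandardFilling (surgA α T) (surgT α T) := by
  constructor
  · rw [sum_surgA hc]
    have hbox : Set.BijOn (boxMap α T) (cd (surgA α T) : Set (ℕ × ℕ)) (cd α : Set (ℕ × ℕ)) := by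
      refine ⟨fun p hp => boxMap_mem_cd hc hp, ?_, ?_⟩
      · intro p _ q _ hpq
        have := congrArg (boxMap α T) hpq
        rw [boxMap_invol, boxMap_invol] at this
        exact this
      · intro q hq
        refine ⟨boxMap α T q, boxMap_mem_cd_rev hc hq, boxMap_invol q⟩
    exact hSF.1.comp hbox
  · intro p hp
    apply hSF.2
    intro hmem
    apply hp
    have := boxMap_mem_cd_rev hc hmem
    rw [boxMap_invol] at this
    exact this

lemma surg_RI (hRI : RowsIncrease α T) : RowsIncrease (surgA α T) (surgT α T) := by
  intro c r hcd1 hcd2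
  have h0 : 1 ≤ c := (mem_cd_iff.1 hcd1).1
  show T (boxMap α T (c, r)) < T (boxMap α T (c + 1, r))
  by_cases hr : r = rowj α T ∨ r = rowj' α T
  · by_cases hA : c + 1 ≤ colL α T
    · unfold boxMap
      rw [if_pos (by omega : c ≤ colL α T), if_pos hA]
      exact hRI c r ((cd_surg_low hc h0 (by omega)).1 hcd1)
        ((cd_surg_low hc (by omega) hA).1 hcd2)
    · by_cases hB : c ≤ colL α T
      · -- boundary: c = colL
        unfold boxMap
        rw [if_pos hB, if_neg hA]
        have hcda : (c, r) ∈ cd α := (cd_surg_low hc h0 hB).1 hcd1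
        have hcdb : (c + 1, swapRow (rowj α T) (rowj' α T) r) ∈ cd α :=
          (cd_surgA_iff hc).1 hcd2
        have hle := T_le_ctime hc hRI hr hcda hB
        have hjne := rowj'_gt hc
        have hsw : swapRow (rowj α T) (rowj' α T) r = rowj α T ∨
            swapRow (rowj α T) (rowj' α T) r = rowj' α T := by
          unfold swapRow
          rcases hr with rfl | rfl
          · rw [if_pos rfl]; right; rfl
          · rw [if_neg (by omega), if_pos rfl]; left; rfl
        have hgt := T_gt_ctime hc hRI hsw hcdb (by omega)
        show T (c, r) < T (c + 1, swapRow (rowj α T) (rowj' α T) r)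
        omega
      · unfold boxMap
        rw [if_neg hB, if_neg hA]
        exact hRI c (swapRow (rowj α T) (rowj' α T) r) ((cd_surgA_iff hc).1 hcd1)
          ((cd_surgA_iff hc).1 hcd2)
  · push_neg at hr
    have hswr : swapRow (rowj α T) (rowj' α T) r = r := swapRow_eq_of_ne hr.1 hr.2
    have hb1 : boxMap α T (c, r) = (c, r) := by
      unfold boxMap
      by_cases h : c ≤ colL α T
      · rw [if_pos h]
      · rw [if_neg h]; simp only; rw [hswr]
    have hb2 : boxMap α T (c + 1, r) = (c + 1, r) := by
      unfold boxMap
      by_cases h : c + 1 ≤ colL α T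
      · rw [if_pos h]
      · rw [if_neg h]; simp only; rw [hswr]
    rw [hb1, hb2]
    have hcda : (c, r) ∈ cd α := by
      have := (cd_surgA_iff hc).1 hcd1
      rwa [hswr] at this
    have hcdb : (c + 1, r) ∈ cd α := by
      have := (cd_surgA_iff hc).1 hcd2
      rwa [hswr] at this
    exact hRI c r hcda hcdb

lemma surg_FC (hFC : FirstColIncreases α T) : FirstColIncreases (surgA α T) (surgT α T) := by
  intro r hcd1 hcd2
  have hL := colL_pos hc
  show T (boxMap α T (1, r)) < T (boxMap α T (1, r + 1))
  unfold boxMap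
  rw [if_pos (by omega : (1 : ℕ) ≤ colL α T), if_pos (by omega : (1 : ℕ) ≤ colL α T)]
  exact hFC r ((cd_surg_low hc le_rfl (by omega)).1 hcd1)
    ((cd_surg_low hc le_rfl (by omega)).1 hcd2)

end WithColl

end Surgery

section Surgery2

variable {α : List ℕ} {T : ℕ × ℕ → ℕ}

lemma rowLen_eq_card_of_le {r k N : ℕ} (hN : part α r ≤ N) :
    rowLen α T r k =
      (Finset.filter (fun c => (c, r) ∈ cd α ∧ T (c, r) ≤ k) (Finset.Icc 1 N)).card := by
  rw [rowLen_eq_card_colset]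
  congr 1
  apply Finset.ext
  intro c
  simp only [Finset.mem_filter, Finset.mem_Icc]
  constructor
  · rintro ⟨⟨u1, u2⟩, u3⟩; exact ⟨⟨u1, by omega⟩, u3⟩
  · rintro ⟨⟨u1, u2⟩, u3, u4⟩
    rcases mem_cd_iff'.1 u3 with ⟨_, hb, _, _⟩
    exact ⟨⟨u1, hb⟩, u3, u4⟩

lemma rowLen_transfer {β : List ℕ} {U : ℕ × ℕ → ℕ} {r s k : ℕ}
    (h : ∀ c, 1 ≤ c → (((c, r) ∈ cd β ∧ U (c, r) ≤ k) ↔ ((c, s) ∈ cd α ∧ T (c, s) ≤ k))) :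
    rowLen β U r k = rowLen α T s k := by
  rw [rowLen_eq_card_of_le (N := max (part β r) (part α s)) (le_max_left _ _),
    rowLen_eq_card_of_le (N := max (part β r) (part α s)) (le_max_right _ _)]
  congr 1
  apply Finset.filter_congr
  intro c hcI
  rw [Finset.mem_Icc] at hcI
  exact h c hcI.1

section WithColl2

variable (hc : HasColl α T)
include hc

lemma rowLen_surg_low (hRI : RowsIncrease α T) {r k : ℕ} (hk : k ≤ ctime α T) :
    rowLen (surgA α T) (surgT α T) r k = rowLen α T r k := by
  apply rowLen_transfer
  intro c h1
  by_cases hcl : c ≤ colL α T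
  · have hT' : surgT α T (c, r) = T (c, r) := by
      unfold surgT boxMap
      rw [if_pos hcl]
    rw [hT', cd_surg_low hc h1 hcl]
  · have hT' : surgT α T (c, r) = T (c, swapRow (rowj α T) (rowj' α T) r) := by
      unfold surgT boxMap
      rw [if_neg hcl]
    by_cases hr : r = rowj α T ∨ r = rowj' α T
    · constructor
      · rintro ⟨hm, hv⟩
        exfalso
        have hcda : (c, swapRow (rowj α T) (rowj' α T) r) ∈ cd α := (cd_surgA_iff hc).1 hm
        have hsw : swapRow (rowj α T) (rowj' α T) r = rowj α T ∨
            swapRow (rowj α T) (rowj' α T) r = rowj' α T := by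
          have hjne := rowj'_gt hc
          unfold swapRow
          rcases hr with rfl | rfl
          · rw [if_pos rfl]; right; rfl
          · rw [if_neg (by omega), if_pos rfl]; left; rfl
        have := T_gt_ctime hc hRI hsw hcda (by omega)
        rw [hT'] at hv
        omega
      · rintro ⟨hm, hv⟩
        exfalso
        have := T_gt_ctime hc hRI hr hm (by omega)
        omega
    · push_neg at hr
      have hswr : swapRow (rowj α T) (rowj' α T) r = r := swapRow_eq_of_ne hr.1 hr.2
      rw [hT', hswr, cd_surgA_iff hc, hswr]

lemma rowLen_surg_high (hSF : IsStandardFilling α T) (hRI : RowsIncrease α T) {r k : ℕ}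
    (hk : ctime α T ≤ k) :
    rowLen (surgA α T) (surgT α T) r k = rowLen α T (swapRow (rowj α T) (rowj' α T) r) k := by
  apply rowLen_transfer
  intro c h1
  by_cases hcl : c ≤ colL α T
  · have hT' : surgT α T (c, r) = T (c, r) := by
      unfold surgT boxMap
      rw [if_pos hcl]
    rw [hT']
    by_cases hr : r = rowj α T ∨ r = rowj' α T
    · have hjne := rowj'_gt hc
      have hj1 := rowj_pos hc
      have hj3 := rowj_le_len hc
      have hj4 := rowj'_le_len hc
      have hp1 := colL_le_part (α := α) (T := T) hc
      have hp2 := colL_le_part' hc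
      have hsw : swapRow (rowj α T) (rowj' α T) r = rowj α T ∨
          swapRow (rowj α T) (rowj' α T) r = rowj' α T := by
        unfold swapRow
        rcases hr with rfl | rfl
        · rw [if_pos rfl]; right; rfl
        · rw [if_neg (by omega), if_pos rfl]; left; rfl
      have hm1 : (c, r) ∈ cd (surgA α T) := by
        rw [cd_surg_low hc h1 hcl]
        rcases hr with rfl | rfl
        · exact mem_cd_iff'.2 ⟨h1, by omega, by omega, by omega⟩
        · exact mem_cd_iff'.2 ⟨h1, by omega, by omega, by omega⟩
      have hm2 : (c, swapRow (rowj α T) (rowj' α T) r) ∈ cd α := by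
        rcases hsw with hs | hs <;> rw [hs]
        · exact mem_cd_iff'.2 ⟨h1, by omega, by omega, by omega⟩
        · exact mem_cd_iff'.2 ⟨h1, by omega, by omega, by omega⟩
      have hv1 : T (c, r) ≤ k :=
        le_trans (T_le_ctime hc hRI hr ((cd_surg_low hc h1 hcl).1 hm1) hcl) hk
      have hv2 : T (c, swapRow (rowj α T) (rowj' α T) r) ≤ k :=
        le_trans (T_le_ctime hc hRI hsw hm2 hcl) hk
      constructor
      · rintro _; exact ⟨hm2, hv2⟩
      · rintro _; exact ⟨hm1, hv1⟩
    · push_neg at hr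
      have hswr : swapRow (rowj α T) (rowj' α T) r = r := swapRow_eq_of_ne hr.1 hr.2
      rw [hswr, cd_surg_low hc h1 hcl]
  · have hT' : surgT α T (c, r) = T (c, swapRow (rowj α T) (rowj' α T) r) := by
      unfold surgT boxMap
      rw [if_neg hcl]
    rw [hT', cd_surgA_iff hc]

lemma hasColl_surg (hRI : RowsIncrease α T) : HasColl (surgA α T) (surgT α T) := by
  refine ⟨ctime α T, ?_, ?_⟩
  · rw [sum_surgA hc]; exact ctime_le
  · rcases coll_ctime hc with ⟨r, r', h1, h2, h3⟩
    refine ⟨r, r', h1, ?_, ?_⟩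
    · rw [rowLen_surg_low hc hRI le_rfl]; exact h2
    · rw [rowLen_surg_low hc hRI le_rfl, rowLen_surg_low hc hRI le_rfl]; exact h3

lemma coll_surg_iff (hSF : IsStandardFilling α T) (hRI : RowsIncrease α T) (k : ℕ) :
    Coll (surgA α T) (surgT α T) k ↔ Coll α T k := by
  rcases le_or_gt k (ctime α T) with hk | hk
  · constructor
    · rintro ⟨r, r', h1, h2, h3⟩
      rw [rowLen_surg_low hc hRI hk] at h2 h3
      rw [rowLen_surg_low hc hRI hk] at h3
      exact ⟨r, r', h1, h2, h3⟩
    · rintro ⟨r, r', h1, h2, h3⟩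
      refine ⟨r, r', h1, ?_, ?_⟩
      · rw [rowLen_surg_low hc hRI hk]; exact h2
      · rw [rowLen_surg_low hc hRI hk, rowLen_surg_low hc hRI hk]; exact h3
  · have hsw2 : ∀ r, swapRow (rowj α T) (rowj' α T) (swapRow (rowj α T) (rowj' α T) r) = r :=
      fun r => swapRow_invol _ _ _
    rw [coll_iff_ne, coll_iff_ne]
    constructor
    · rintro ⟨r, r', h1, h2, h3⟩
      rw [rowLen_surg_high hc hSF hRI (by omega)] at h2 h3
      rw [rowLen_surg_high hc hSF hRI (by omega)] at h3
      refine ⟨_, _, ?_, h2, h3⟩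
      intro heq
      apply h1
      rw [← hsw2 r, heq, hsw2]
    · rintro ⟨r, r', h1, h2, h3⟩
      refine ⟨swapRow (rowj α T) (rowj' α T) r, swapRow (rowj α T) (rowj' α T) r', ?_, ?_, ?_⟩
      · intro heq
        apply h1
        rw [← hsw2 r, heq, hsw2]
      · rw [rowLen_surg_high hc hSF hRI (by omega), hsw2]; exact h2
      · rw [rowLen_surg_high hc hSF hRI (by omega), rowLen_surg_high hc hSF hRI (by omega),
          hsw2, hsw2]
        exact h3

end WithColl2

lemma aux_findGreatest_congr {P Q : ℕ → Prop} [DecidablePred P] [DecidablePred Q]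
    (h : ∀ n, P n ↔ Q n) : ∀ b, Nat.findGreatest P b = Nat.findGreatest Q b
  | 0 => rfl
  | b + 1 => by
    rw [Nat.findGreatest_succ, Nat.findGreatest_succ]
    by_cases hp : P (b + 1)
    · rw [if_pos hp, if_pos ((h _).1 hp)]
    · rw [if_neg hp, if_neg (fun hq => hp ((h _).2 hq)), aux_findGreatest_congr h b]

lemma aux_find_congr {P Q : ℕ → Prop} [DecidablePred P] [DecidablePred Q]
    (h1 : ∃ n, P n) (h2 : ∃ n, Q n) (h : ∀ n, P n ↔ Q n) : Nat.find h1 = Nat.find h2 := by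
  apply le_antisymm
  · exact Nat.find_min' h1 ((h _).2 (Nat.find_spec h2))
  · exact Nat.find_min' h2 ((h _).1 (Nat.find_spec h1))

lemma getElem_eq_part {β : List ℕ} {i : ℕ} (h : i < β.length) : β[i] = part β (i + 1) := by
  unfold part
  rw [List.getD_eq_getElem _ _ (by omega)]
  congr 1

section WithColl3

variable (hc : HasColl α T)
include hc

lemma ctime_surg (hSF : IsStandardFilling α T) (hRI : RowsIncrease α T) :
    ctime (surgA α T) (surgT α T) = ctime α T := by
  unfold ctime
  rw [sum_surgA hc]
  exact aux_findGreatest_congr (coll_surg_iff hc hSF hRI) α.sum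

lemma collP_surg_iff (hSF : IsStandardFilling α T) (hRI : RowsIncrease α T) (r : ℕ) :
    CollP (surgA α T) (surgT α T) (ctime (surgA α T) (surgT α T)) r ↔
      CollP α T (ctime α T) r := by
  rw [ctime_surg hc hSF hRI]
  unfold CollP
  constructor
  · rintro ⟨r', h1, h2, h3⟩
    rw [rowLen_surg_low hc hRI le_rfl] at h2 h3
    rw [rowLen_surg_low hc hRI le_rfl] at h3
    exact ⟨r', h1, h2, h3⟩
  · rintro ⟨r', h1, h2, h3⟩
    refine ⟨r', h1, ?_, ?_⟩
    · rw [rowLen_surg_low hc hRI le_rfl]; exact h2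
    · rw [rowLen_surg_low hc hRI le_rfl, rowLen_surg_low hc hRI le_rfl]; exact h3

lemma rowj_surg (hSF : IsStandardFilling α T) (hRI : RowsIncrease α T) :
    rowj (surgA α T) (surgT α T) = rowj α T := by
  unfold rowj
  have hex1 : ∃ r, CollP (surgA α T) (surgT α T) (ctime (surgA α T) (surgT α T)) r := by
    rcases rowj_spec hc with ⟨r', h1, h2, h3⟩
    exact ⟨rowj α T, (collP_surg_iff hc hSF hRI _).2 ⟨r', h1, h2, h3⟩⟩
  have hex2 : ∃ r, CollP α T (ctime α T) r := ⟨rowj α T, rowj_spec hc⟩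
  rw [dif_pos hex1, dif_pos hex2]
  exact aux_find_congr hex1 hex2 (collP_surg_iff hc hSF hRI)

lemma rowj'_surg (hSF : IsStandardFilling α T) (hRI : RowsIncrease α T) :
    rowj' (surgA α T) (surgT α T) = rowj' α T := by
  unfold rowj'
  have h1 : CollP (surgA α T) (surgT α T)
      (ctime (surgA α T) (surgT α T)) (rowj (surgA α T) (surgT α T)) := by
    rw [rowj_surg hc hSF hRI]
    exact (collP_surg_iff hc hSF hRI _).2 (rowj_spec hc)
  have h2 : CollP α T (ctime α T) (rowj α T) := rowj_spec hc
  rw [dif_pos h1, dif_pos h2]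
  apply aux_find_congr
  intro m
  rw [ctime_surg hc hSF hRI, rowj_surg hc hSF hRI]
  constructor
  · rintro ⟨u1, u2, u3⟩
    rw [rowLen_surg_low hc hRI le_rfl] at u2 u3
    rw [rowLen_surg_low hc hRI le_rfl] at u3
    exact ⟨u1, u2, u3⟩
  · rintro ⟨u1, u2, u3⟩
    refine ⟨u1, ?_, ?_⟩
    · rw [rowLen_surg_low hc hRI le_rfl]; exact u2
    · rw [rowLen_surg_low hc hRI le_rfl, rowLen_surg_low hc hRI le_rfl]; exact u3

lemma colL_surg (hSF : IsStandardFilling α T) (hRI : RowsIncrease α T) :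
    colL (surgA α T) (surgT α T) = colL α T := by
  unfold colL
  rw [rowj_surg hc hSF hRI, ctime_surg hc hSF hRI, rowLen_surg_low hc hRI le_rfl]

lemma boxMap_surg (hSF : IsStandardFilling α T) (hRI : RowsIncrease α T) :
    boxMap (surgA α T) (surgT α T) = boxMap α T := by
  funext p
  unfold boxMap
  rw [colL_surg hc hSF hRI, rowj_surg hc hSF hRI, rowj'_surg hc hSF hRI]

lemma surgT_invol (hSF : IsStandardFilling α T) (hRI : RowsIncrease α T) :
    surgT (surgA α T) (surgT α T) = T := by
  funext p
  show surgT α T (boxMap (surgA α T) (surgT α T) p) = T p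
  rw [boxMap_surg hc hSF hRI]
  show T (boxMap α T (boxMap α T p)) = T p
  rw [boxMap_invol]

lemma surgA_invol (hSF : IsStandardFilling α T) (hRI : RowsIncrease α T) :
    surgA (surgA α T) (surgT α T) = α := by
  apply List.ext_getElem
  · rw [length_surgA, length_surgA]
  · intro i h1 h2
    rw [getElem_eq_part h1, getElem_eq_part h2]
    have hlen : i < α.length := h2
    have hi1 : 1 ≤ i + 1 := by omega
    have hi2 : i + 1 ≤ (surgA α T).length := by rw [length_surgA]; omega
    rw [part_surgA hi1 hi2, rowj_surg hc hSF hRI, rowj'_surg hc hSF hRI]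
    rw [part_surgA]
    · rw [swapRow_invol]
    · have := (swapRow_bounds hc (r := i + 1)).2 ⟨by omega, by omega⟩
      omega
    · have := (swapRow_bounds hc (r := i + 1)).2 ⟨by omega, by omega⟩
      omega

end WithColl3

end Surgery2

section Surgery3

variable {α : List ℕ} {T : ℕ × ℕ → ℕ}

variable (hc : HasColl α T)
include hc

lemma surg_peakCond (hSF : IsStandardFilling α T) (hRI : RowsIncrease α T)
    (hpc : PeakCond α T) : PeakCond (surgA α T) (surgT α T) := by
  apply peakCond_of_peakRL (surg_SF hc hSF) (surg_RI hc hRI)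
  rintro k hk1 hk2 r hr1 ⟨r', hrr', hpos⟩
  rw [sum_surgA hc] at hk2
  have hrlα := peakRL_of_peakCond hpc
  have hL2 := colL_ge_two hc hSF hpc
  have hjne := rowj'_gt hc
  rcases le_or_gt k (ctime α T) with hk | hk
  · rw [rowLen_surg_low hc hRI hk] at hpos
    rw [rowLen_surg_low hc hRI hk]
    exact hrlα k hk1 hk2 r hr1 ⟨r', hrr', hpos⟩
  · rw [rowLen_surg_high hc hSF hRI (le_of_lt hk)] at hpos
    rw [rowLen_surg_high hc hSF hRI (le_of_lt hk)]
    have hmonoj : colL α T ≤ rowLen α T (rowj α T) k := by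
      unfold colL
      exact rowLen_mono α T _ (le_of_lt hk)
    have hmonoj' : colL α T ≤ rowLen α T (rowj' α T) k := by
      have h0 : colL α T = rowLen α T (rowj' α T) (ctime α T) := rowj'_eq hc
      rw [h0]
      exact rowLen_mono α T _ (le_of_lt hk)
    by_cases hr : r = rowj α T ∨ r = rowj' α T
    · have hsw : swapRow (rowj α T) (rowj' α T) r = rowj α T ∨
          swapRow (rowj α T) (rowj' α T) r = rowj' α T := by
        unfold swapRow
        rcases hr with rfl | rfl
        · rw [if_pos rfl]; right; rfl
        · rw [if_neg (by omega), if_pos rfl]; left; rfl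
      rcases hsw with hs | hs <;> rw [hs] <;> omega
    · push_neg at hr
      rw [swapRow_eq_of_ne hr.1 hr.2]
      by_cases hr' : r' = rowj α T ∨ r' = rowj' α T
      · refine hrlα k hk1 hk2 r hr1 ⟨rowj' α T, ?_, by omega⟩
        rcases hr' with rfl | rfl <;> omega
      · push_neg at hr'
        rw [swapRow_eq_of_ne hr'.1 hr'.2] at hpos
        exact hrlα k hk1 hk2 r hr1 ⟨r', hrr', hpos⟩

lemma boxMap_fix_of_le_ctime (hRI : RowsIncrease α T) {p : ℕ × ℕ} (hp : p ∈ cd α)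
    (hle : T p ≤ ctime α T) : boxMap α T p = p := by
  obtain ⟨c, r⟩ := p
  unfold boxMap
  by_cases hcl : c ≤ colL α T
  · rw [if_pos hcl]
  · rw [if_neg hcl]
    by_cases hr : r = rowj α T ∨ r = rowj' α T
    · exfalso
      have := T_gt_ctime hc hRI hr hp (by omega)
      omega
    · push_neg at hr
      rw [swapRow_eq_of_ne hr.1 hr.2]

/-- key: `boxMap` preserves the colex comparison of boxes holding consecutive entries -/
lemma boxLT_boxMap_iff (hSF : IsStandardFilling α T) (hRI : RowsIncrease α T)
    {p q : ℕ × ℕ} (hp : p ∈ cd α) (hq : q ∈ cd α) (hval : T q = T p + 1) :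
    boxLT (boxMap α T q) (boxMap α T p) ↔ boxLT q p := by
  have hcolp : (boxMap α T p).1 = p.1 := by
    unfold boxMap
    by_cases h : p.1 ≤ colL α T
    · rw [if_pos h]
    · rw [if_neg h]
  have hcolq : (boxMap α T q).1 = q.1 := by
    unfold boxMap
    by_cases h : q.1 ≤ colL α T
    · rw [if_pos h]
    · rw [if_neg h]
  by_cases hcc : p.1 = q.1
  · -- same column: both boxes are fixed by boxMap
    have hrne : q.2 ≠ p.2 := by
      intro h
      have : p = q := Prod.ext hcc h.symm
      rw [this] at hval
      omega
    have h1 : rowLen α T p.2 (T p) = p.1 := by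
      rw [← Prod.mk.eta (p := p)] at hp
      exact rowLen_at_entry hRI hp rfl
    have h2 : rowLen α T p.2 (T q) = p.1 := by
      rw [hval]
      rw [rowLen_succ_of_ne hSF.injCd hq hval hrne]
      exact h1
    have h3 : rowLen α T q.2 (T q) = q.1 := by
      rw [← Prod.mk.eta (p := q)] at hq
      exact rowLen_at_entry hRI hq rfl
    have hcoll : Coll α T (T q) := by
      rw [coll_iff_ne]
      refine ⟨p.2, q.2, fun h => hrne h.symm, ?_, ?_⟩
      · rw [h3]
        exact (mem_cd_iff.1 hq).1
      · rw [h2, h3, hcc]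
    have hbound : T q ≤ α.sum := (hSF.1.1 hq).2
    have hle : T q ≤ ctime α T := le_ctime hbound hcoll
    rw [boxMap_fix_of_le_ctime hc hRI hp (by omega), boxMap_fix_of_le_ctime hc hRI hq hle]
  · -- different columns: comparison is by column, preserved
    unfold boxLT
    rw [hcolp, hcolq]
    constructor
    · rintro (h | ⟨h, _⟩)
      · exact Or.inl h
      · exact absurd h.symm hcc
    · rintro (h | ⟨h, _⟩)
      · exact Or.inl h
      · exact absurd h.symm hcc

lemma des_surg (hSF : IsStandardFilling α T) (hRI : RowsIncrease α T) :
    DesWord (wC (surgA α T) (surgT α T)) = DesWord (wC α T) := by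
  have hSF' := surg_SF hc hSF
  apply Finset.ext
  intro i
  rw [mem_DesWord_wC hSF'.injCd, mem_DesWord_wC hSF.injCd]
  constructor
  · rintro ⟨p, hp, q, hq, hTp, hTq, hlt⟩
    refine ⟨boxMap α T p, boxMap_mem_cd hc hp, boxMap α T q, boxMap_mem_cd hc hq,
      hTp, hTq, ?_⟩
    have hval : T (boxMap α T q) = T (boxMap α T p) + 1 := by
      show surgT α T q = surgT α T p + 1
      rw [hTp, hTq]
    have := (boxLT_boxMap_iff hc hSF hRI (boxMap_mem_cd hc hp) (boxMap_mem_cd hc hq) hval)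
    rw [boxMap_invol, boxMap_invol] at this
    exact this.1 hlt
  · rintro ⟨p, hp, q, hq, hTp, hTq, hlt⟩
    refine ⟨boxMap α T p, boxMap_mem_cd_rev hc hp, boxMap α T q, boxMap_mem_cd_rev hc hq,
      ?_, ?_, ?_⟩
    · show T (boxMap α T (boxMap α T p)) = i
      rw [boxMap_invol]; exact hTp
    · show T (boxMap α T (boxMap α T q)) = i + 1
      rw [boxMap_invol]; exact hTq
    · exact (boxLT_boxMap_iff hc hSF hRI hp hq (by omega)).2 hlt

end Surgery3

section H1

variable {α : List ℕ} {T : ℕ × ℕ → ℕ}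

/-- In an SYCT of strictly decreasing shape, columns increase bottom-to-top. -/
lemma col_inc (hRI : RowsIncrease α T) (hYT : YoungTriple α T) (hinj : InjCd α T)
    (hstr : ∀ r r', 1 ≤ r → r < r' → r' ≤ α.length → part α r' < part α r)
    {c r r' : ℕ} (h1 : 1 ≤ r) (h2 : r < r') (hq : (c, r') ∈ cd α) :
    T (c, r) < T (c, r') := by
  rcases mem_cd_iff'.1 hq with ⟨hc1, hc2, hc3, hc4⟩
  have hstrr := hstr r r' h1 h2 hc4
  have hp : (c, r) ∈ cd α := mem_cd_iff'.2 ⟨hc1, by omega, h1, by omega⟩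
  by_contra hcon
  push_neg at hcon
  have hne : T (c, r') ≠ T (c, r) := by
    intro h
    have := hinj _ hq _ hp h
    have := congrArg Prod.snd this
    simp only at this
    omega
  have hlt : T (c, r') < T (c, r) := by omega
  -- escalation
  have claim : ∀ m, c + m ≤ part α r →
      ((c + m, r') ∈ cd α ∧ T (c + m, r') < T (c + m, r)) := by
    intro m
    induction m with
    | zero =>
      intro _
      exact ⟨by rw [Nat.add_zero]; exact hq, by rw [Nat.add_zero]; exact hlt⟩
    | succ d ih =>
      intro hle
      have hd := ih (by omega)
      have hmem2 : (c + d + 1, r) ∈ cd α := mem_cd_iff'.2 ⟨by omega, by omega, h1, by omega⟩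
      have hmem1 : (c + d, r) ∈ cd α := mem_cd_iff'.2 ⟨by omega, by omega, h1, by omega⟩
      have hRIr := hRI (c + d) r hmem1 hmem2
      have htrip := hYT (c + d) r r' h2 hd.1 hmem2 (by omega)
      rw [show c + (d + 1) = c + d + 1 by omega]
      exact htrip
  have hfin := claim (part α r - c) (by omega)
  rcases mem_cd_iff'.1 hfin.1 with ⟨_, hb, _, _⟩
  omega

/-- SYCT of strictly decreasing shape has no collision. -/
lemma noColl_of_SYCT (hSF : IsStandardFilling α T) (hRI : RowsIncrease α T)
    (hYT : YoungTriple α T)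
    (hstr : ∀ r r', 1 ≤ r → r < r' → r' ≤ α.length → part α r' < part α r) :
    ¬ HasColl α T := by
  rintro ⟨k, hk, r, r', h2, hpos, heq⟩
  have h1 : 1 ≤ r := by
    by_contra h
    have : r = 0 := by omega
    rw [this, rowLen_zero_row] at heq
    omega
  have hr'len : r' ≤ α.length := by
    by_contra h
    rw [rowLen_eq_zero_of_gt (by omega)] at hpos
    omega
  set m := rowLen α T r' k with hm
  have hrm : rowLen α T r k = m := heq
  have hstrr := hstr r r' h1 h2 hr'len
  have hm_le_part : m ≤ part α r' := by rw [hm]; exact rowLen_le_part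
  have hq : (m, r') ∈ cd α := mem_cd_iff'.2 ⟨hpos, hm_le_part, by omega, hr'len⟩
  have hp1 : (m + 1, r) ∈ cd α := mem_cd_iff'.2 ⟨by omega, by omega, h1, by omega⟩
  have hTq : T (m, r') ≤ k := (rowLen_le_iff hRI hq).2 (le_of_eq hm.symm)
  have hTp1 : k < T (m + 1, r) := by
    by_contra h
    push_neg at h
    have := (rowLen_le_iff hRI hp1).1 h
    omega
  have htrip := hYT m r r' h2 hq hp1 (by omega)
  have hcol := col_inc hRI hYT hSF.injCd hstr h1 h2 htrip.1
  omega

/-- SPIT with no collision satisfies the Young triple condition. -/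
lemma YT_of_noColl (hSF : IsStandardFilling α T) (hRI : RowsIncrease α T)
    (hnc : ¬ HasColl α T) : YoungTriple α T := by
  intro c r r' h2 hm1 hm2 hle
  have hc1 : 1 ≤ c := (mem_cd_iff.1 hm1).1
  have h1 : 1 ≤ r := (mem_cd_iff'.1 hm2).2.2.1
  set v := T (c + 1, r) with hv
  have hvpos : 1 ≤ v := by
    rw [hv]
    exact (hSF.1.1 hm2).1
  have hq1 : 1 ≤ T (c, r') := (hSF.1.1 hm1).1
  have hne : T (c, r') ≠ v := by
    intro h
    have := hSF.injCd _ hm1 _ hm2 h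
    have := congrArg Prod.fst this
    simp only at this
    omega
  have hlt : T (c, r') ≤ v - 1 := by omega
  have hv2 : 2 ≤ v := by omega
  have hvsum : v ≤ α.sum := (hSF.1.1 hm2).2
  -- row r has length exactly c at time v-1
  have hcr : (c, r) ∈ cd α := by
    rcases mem_cd_iff'.1 hm2 with ⟨_, hb, hcc, hd⟩
    exact mem_cd_iff'.2 ⟨hc1, by omega, hcc, hd⟩
  have hrlow : c ≤ rowLen α T r (v - 1) := by
    rw [← rowLen_le_iff hRI hcr]
    have := hRI c r hcr hm2
    omega
  have hrhigh : rowLen α T r (v - 1) < c + 1 := by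
    by_contra h
    push_neg at h
    have hcd1 : (c + 1, r) ∈ cd α := hm2
    have := (rowLen_le_iff hRI hcd1).2 h
    omega
  have hrlen : rowLen α T r (v - 1) = c := by omega
  have hr'low : c ≤ rowLen α T r' (v - 1) := (rowLen_le_iff hRI hm1).1 hlt
  have hr'ne : rowLen α T r' (v - 1) ≠ c := by
    intro h
    apply hnc
    exact ⟨v - 1, by omega, r, r', h2, by omega, by omega⟩
  have hr'high : c + 1 ≤ rowLen α T r' (v - 1) := by omega
  have hcd' : (c + 1, r') ∈ cd α := by
    rcases mem_cd_iff'.1 hm1 with ⟨_, _, hcc, hd⟩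
    refine mem_cd_iff'.2 ⟨by omega, le_trans hr'high rowLen_le_part, hcc, hd⟩
  refine ⟨hcd', ?_⟩
  have := (rowLen_le_iff hRI hcd').2 hr'high
  omega

/-- SPIT with no collision has strictly decreasing intermediate shapes;
in particular the final shape is strictly decreasing. -/
lemma parts_strict_of_noColl (hSF : IsStandardFilling α T) (hRI : RowsIncrease α T)
    (hpc : PeakCond α T) (hnc : ¬ HasColl α T)
    (hpos : ∀ r, 1 ≤ r → r ≤ α.length → 1 ≤ part α r) :
    ∀ r r', 1 ≤ r → r < r' → r' ≤ α.length → part α r' < part α r := by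
  intro r r' h1 h2 hlen
  have hrl := peakRL_of_peakCond hpc
  have hcd1 : (1, r') ∈ cd α := mem_cd_iff'.2 ⟨le_rfl, hpos r' (by omega) hlen, by omega, hlen⟩
  set t₀ := T (1, r') with ht₀
  have ht₀pos : 1 ≤ t₀ := (hSF.1.1 hcd1).1
  have ht₀sum : t₀ ≤ α.sum := (hSF.1.1 hcd1).2
  have hr'1 : rowLen α T r' t₀ = 1 := rowLen_at_entry hRI hcd1 rfl
  have hr2 : 2 ≤ rowLen α T r t₀ :=
    hrl t₀ ht₀pos ht₀sum r h1 ⟨r', h2, by omega⟩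
  have hstep : ∀ d, t₀ + d ≤ α.sum →
      rowLen α T r' (t₀ + d) < rowLen α T r (t₀ + d) := by
    intro d
    induction d with
    | zero =>
      intro _
      rw [Nat.add_zero]
      omega
    | succ e ih =>
      intro hle
      have hi := ih (by omega)
      have hsucc : rowLen α T r' (t₀ + e + 1) ≤ rowLen α T r' (t₀ + e) + 1 :=
        rowLen_succ_le hSF.injCd _ _
      have hmono : rowLen α T r (t₀ + e) ≤ rowLen α T r (t₀ + e + 1) :=
        rowLen_mono α T r (by omega)
      rw [show t₀ + (e + 1) = t₀ + e + 1 by omega]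
      by_contra hcon
      push_neg at hcon
      have heq : rowLen α T r (t₀ + e + 1) = rowLen α T r' (t₀ + e + 1) := by omega
      apply hnc
      refine ⟨t₀ + e + 1, by omega, r, r', h2, ?_, heq⟩
      have : 1 = rowLen α T r' t₀ := hr'1.symm
      have := rowLen_mono α T r' (show t₀ ≤ t₀ + e + 1 by omega)
      omega
  have hfin := hstep (α.sum - t₀) (by omega)
  rw [show t₀ + (α.sum - t₀) = α.sum by omega] at hfin
  have h1r : rowLen α T r α.sum = part α r * (if 1 ≤ r ∧ r ≤ α.length then 1 else 0) :=
    rowLen_top hSF le_rfl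
  have h2r : rowLen α T r' α.sum = part α r' * (if 1 ≤ r' ∧ r' ≤ α.length then 1 else 0) :=
    rowLen_top hSF le_rfl
  rw [if_pos ⟨h1, by omega⟩, mul_one] at h1r
  rw [if_pos ⟨by omega, hlen⟩, mul_one] at h2r
  omega

end H1

section H2

variable {α : List ℕ} {T : ℕ × ℕ → ℕ}

lemma col1_mono (hFC : FirstColIncreases α T)
    (hpos : ∀ r, 1 ≤ r → r ≤ α.length → 1 ≤ part α r)
    {r r' : ℕ} (h1 : 1 ≤ r) (h2 : r < r') (hlen : r' ≤ α.length) :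
    T (1, r) < T (1, r') := by
  have hmem : ∀ s, 1 ≤ s → s ≤ α.length → (1, s) ∈ cd α := fun s hs1 hs2 =>
    mem_cd_iff'.2 ⟨le_rfl, hpos s hs1 hs2, hs1, hs2⟩
  have claim : ∀ d, r + 1 + d ≤ α.length → T (1, r) < T (1, r + 1 + d) := by
    intro d
    induction d with
    | zero =>
      intro hle
      rw [Nat.add_zero]
      exact hFC r (hmem r h1 (by omega)) (hmem (r + 1) (by omega) (by omega))
    | succ e ih =>
      intro hle
      have h' := hFC (r + 1 + e) (hmem _ (by omega) (by omega))
        (by rw [show r + 1 + e + 1 = r + 1 + (e + 1) by omega]; exact hmem _ (by omega) (by omega))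
      have := ih (by omega)
      rw [show r + 1 + (e + 1) = r + 1 + e + 1 by omega]
      omega
  have := claim (r' - r - 1) (by omega)
  rw [show r + 1 + (r' - r - 1) = r' by omega] at this
  exact this

/-- value order determines row order in column 1 -/
lemma col1_row_lt (hinj : InjCd α T) (hFC : FirstColIncreases α T)
    (hpos : ∀ r, 1 ≤ r → r ≤ α.length → 1 ≤ part α r)
    {p q : ℕ × ℕ} (hp : p ∈ cd α) (hq : q ∈ cd α) (hp1 : p.1 = 1) (hq1 : q.1 = 1)
    (hv : T p < T q) : p.2 < q.2 := by
  rcases mem_cd_iff.1 hp with ⟨_, _, hp3, hp4⟩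
  rcases mem_cd_iff.1 hq with ⟨_, _, hq3, hq4⟩
  rcases lt_trichotomy p.2 q.2 with h | h | h
  · exact h
  · exfalso
    have : p = q := Prod.ext (by omega) h
    rw [this] at hv
    omega
  · exfalso
    have hpp : p = (1, p.2) := Prod.ext hp1 rfl
    have hqq : q = (1, q.2) := Prod.ext hq1 rfl
    have := col1_mono hFC hpos hq3 h hp4
    rw [← hpp, ← hqq] at this
    omega

lemma peakSet_wY_eq_wC (hSF : IsStandardFilling α T) (hRI : RowsIncrease α T)
    (hFC : FirstColIncreases α T)
    (hpos : ∀ r, 1 ≤ r → r ≤ α.length → 1 ≤ part α r) :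
    PeakSet (DesWord (wY α T)) = PeakSet (DesWord (wC α T)) := by
  have hinj := hSF.injCd
  set X := DesWord (wC α T) with hX
  set Y := DesWord (wY α T) with hY
  have hmemX : ∀ {i}, i ∈ X ↔ ∃ p ∈ cd α, ∃ q ∈ cd α, T p = i ∧ T q = i + 1 ∧ boxLT q p :=
    fun {i} => mem_DesWord_wC hinj
  have hmemY : ∀ {i}, i ∈ Y ↔ ∃ p ∈ cd α, ∃ q ∈ cd α, T p = i ∧ T q = i + 1 ∧ yLT q p :=
    fun {i} => mem_DesWord_wY hinj
  -- X ⊆ Y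
  have hXY : X ⊆ Y := by
    intro i hi
    rcases hmemX.1 hi with ⟨p, hp, q, hq, hTp, hTq, hlt⟩
    refine hmemY.2 ⟨p, hp, q, hq, hTp, hTq, ?_⟩
    have hp1 : 1 ≤ p.1 := (mem_cd_iff.1 hp).1
    have hq1 : 1 ≤ q.1 := (mem_cd_iff.1 hq).1
    rcases hlt with h | ⟨h, h2⟩
    · -- q.1 < p.1
      rcases Nat.lt_or_ge q.1 2 with hq2 | hq2
      · exact Or.inr (Or.inl ⟨by omega, by omega⟩)
      · exact Or.inr (Or.inr ⟨by omega, by omega, Or.inl h⟩)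
    · -- same column, q.2 < p.2
      rcases Nat.lt_or_ge q.1 2 with hq2 | hq2
      · -- both in column 1: impossible since values increase up column 1
        exfalso
        have := col1_row_lt hinj hFC hpos hp hq (by omega) (by omega) (by rw [hTp, hTq]; omega)
        omega
      · exact Or.inr (Or.inr ⟨hq2, by omega, Or.inr ⟨h, h2⟩⟩)
  -- if i ∈ X then the box of i is in column ≥ 2
  have hX2 : ∀ {i}, i ∈ X → ∀ p ∈ cd α, T p = i → 2 ≤ p.1 := by
    intro i hi p hp hTp
    rcases hmemX.1 hi with ⟨p', hp', q, hq, hTp', hTq, hlt⟩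
    have hpe : p = p' := hinj _ hp _ hp' (by rw [hTp, hTp'])
    subst hpe
    by_contra h
    have hp1 : p.1 = 1 := by
      have := (mem_cd_iff.1 hp).1
      omega
    rcases hlt with hh | ⟨hh, hh2⟩
    · have := (mem_cd_iff.1 hq).1
      omega
    · have := col1_row_lt hinj hFC hpos hp hq hp1 (by omega) (by rw [hTp, hTq]; omega)
      omega
  -- if the box of j+1 is in column 1, then j ∈ Y (for 1 ≤ j)
  have hD1Y : ∀ {j}, 1 ≤ j → ∀ q ∈ cd α, T q = j + 1 → q.1 = 1 → j ∈ Y := by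
    intro j hj q hq hTq hq1
    have hjsum : j ≤ α.sum := by
      have := (hSF.1.1 hq).2
      omega
    obtain ⟨p, hp, hTp⟩ : ∃ p ∈ cd α, T p = j := by
      have := hSF.1.2.2 (⟨hj, hjsum⟩ : j ∈ Set.Icc 1 α.sum)
      rcases this with ⟨p, hp, hTp⟩
      exact ⟨p, hp, hTp⟩
    refine hmemY.2 ⟨p, hp, q, hq, hTp, hTq, ?_⟩
    rcases Nat.lt_or_ge p.1 2 with hp2 | hp2
    · have hp1 : p.1 = 1 := by
        have := (mem_cd_iff.1 hp).1
        omega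
      left
      refine ⟨hq1, hp1, ?_⟩
      exact col1_row_lt hinj hFC hpos hp hq hp1 hq1 (by rw [hTp, hTq]; omega)
    · exact Or.inr (Or.inl ⟨hq1, hp2⟩)
  -- main peak-set equality
  apply Finset.ext
  intro i
  unfold PeakSet
  rw [Finset.mem_filter, Finset.mem_filter]
  constructor
  · rintro ⟨hiY, hi1, hi1Y⟩
    have hiX : i ∈ X := by
      by_contra hiX
      rcases hmemY.1 hiY with ⟨p, hp, q, hq, hTp, hTq, hylt⟩
      have hq1 : q.1 = 1 := by
        rcases hylt with ⟨h1, h2, h3⟩ | ⟨h1, h2⟩ | ⟨h1, h2, h3⟩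
        · exact h1
        · exact h1
        · exfalso
          exact hiX (hmemX.2 ⟨p, hp, q, hq, hTp, hTq, h3⟩)
      have hp1 : p.1 = 1 := by
        rcases hylt with ⟨h1, h2, h3⟩ | ⟨h1, h2⟩ | ⟨h1, h2, h3⟩
        · exact h2
        · exfalso
          exact hiX (hmemX.2 ⟨p, hp, q, hq, hTp, hTq, Or.inl (by omega)⟩)
        · omega
      -- i's box is in column 1, and 1 < i, so i-1 ∈ Y: contradiction
      have : i - 1 ∈ Y := by
        have := hD1Y (show 1 ≤ i - 1 by omega) p hp (by rw [hTp]; omega) hp1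
        exact this
      exact hi1Y (by rwa [show i - 1 = i - 1 by rfl] at this)
    refine ⟨hiX, hi1, fun hc => hi1Y (hXY hc)⟩
  · rintro ⟨hiX, hi1, hi1X⟩
    refine ⟨hXY hiX, hi1, ?_⟩
    intro hiY
    apply hi1X
    by_contra hiX'
    -- i-1 ∈ Y but i-1 ∉ X: both boxes of i-1, i in column 1, so box of i in col 1
    rcases hmemY.1 hiY with ⟨p, hp, q, hq, hTp, hTq, hylt⟩
    -- here T q = i - 1 + 1 = i
    have hq1 : q.1 = 1 := by
      rcases hylt with ⟨h1, h2, h3⟩ | ⟨h1, h2⟩ | ⟨h1, h2, h3⟩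
      · exact h1
      · exact h1
      · exact absurd (hmemX.2 ⟨p, hp, q, hq, hTp, hTq, h3⟩) hiX'
    -- but i ∈ X means box of i is in column ≥ 2
    have hTq' : T q = i := by rw [hTq]; omega
    have := hX2 hiX q hq hTq'
    omega

end H2

section SignFinite

variable {α : List ℕ} {T : ℕ × ℕ → ℕ}

lemma getD_eq_part (β : List ℕ) (x : ℕ) : β.getD x 0 = part β (x + 1) := by
  unfold part
  congr 1

lemma spit_subset_funcs (hT : T ∈ SPITset α) (hT' : T ∈ SPITset α) : True := trivial

lemma spitset_finite (α : List ℕ) : (SPITset α).Finite := by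
  classical
  have himg : (fun (U : ℕ × ℕ → ℕ) => (fun b : {x // x ∈ cd α} => U b)) '' (SPITset α) ⊆
      Set.pi Set.univ (fun _ : {x // x ∈ cd α} => Set.Icc 1 α.sum) := by
    rintro g ⟨U, hU, rfl⟩
    intro b _
    exact hU.1.1.1.1 b.2
  have hfin : ((fun (U : ℕ × ℕ → ℕ) => (fun b : {x // x ∈ cd α} => U b)) '' (SPITset α)).Finite :=
    Set.Finite.subset (Set.Finite.pi fun _ => Set.finite_Icc 1 α.sum) himg
  apply Set.Finite.of_finite_image hfin
  intro U1 h1 U2 h2 heq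
  funext p
  by_cases hp : p ∈ cd α
  · exact congrFun heq ⟨p, hp⟩
  · rw [h1.1.1.2 p hp, h2.1.1.2 p hp]

lemma spyct_subset_spit (α : List ℕ) : SPYCTset α ⊆ SPITset α := by
  rintro U ⟨⟨hSF, hRI, hFC, hYT⟩, hpc⟩
  exact ⟨⟨hSF, hRI, hFC⟩, hpc⟩

lemma spyctset_finite (α : List ℕ) : (SPYCTset α).Finite :=
  (spitset_finite α).subset (spyct_subset_spit α)

/-- existence of a sorting permutation -/
lemma exists_sigma {l : List ℕ} (hnd : l.Nodup) (hperm : α.Perm l) :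
    ∃ σ : Equiv.Perm (Fin l.length), ∀ k : Fin l.length, l.get k = α.getD (σ k : ℕ) 0 := by
  classical
  have hlen : α.length = l.length := hperm.length_eq
  have hmem : ∀ k : Fin l.length, l.get k ∈ α := by
    intro k
    apply hperm.mem_iff.2
    rw [List.get_eq_getElem]
    exact List.getElem_mem _
  have hbnd : ∀ k : Fin l.length, α.idxOf (l.get k) < l.length := by
    intro k
    rw [← hlen]
    exact List.idxOf_lt_length_iff.2 (hmem k)
  set σ₀ : Fin l.length → Fin l.length := fun k => ⟨α.idxOf (l.get k), hbnd k⟩ with hσ₀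
  have hval : ∀ k, α.getD (σ₀ k : ℕ) 0 = l.get k := by
    intro k
    rw [hσ₀]
    simp only
    rw [List.getD_eq_getElem _ _ (by rw [hlen]; exact hbnd k)]
    exact List.getElem_idxOf (by rw [hlen]; exact hbnd k)
  have hinj : Function.Injective σ₀ := by
    intro k k' h
    have : α.getD (σ₀ k : ℕ) 0 = α.getD (σ₀ k' : ℕ) 0 := by rw [h]
    rw [hval, hval] at this
    exact (List.Nodup.get_inj_iff hnd).1 this
  have hbij : Function.Bijective σ₀ := Finite.injective_iff_bijective.1 hinj
  exact ⟨Equiv.ofBijective σ₀ hbij, fun k => (hval k).symm⟩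

section EpsLemma

variable (hc : HasColl α T)
include hc

lemma swapRow_fin {l : List ℕ} (hlen : α.length = l.length)
    (pj : Fin l.length) (pj' : Fin l.length)
    (hpj : (pj : ℕ) = rowj α T - 1) (hpj' : (pj' : ℕ) = rowj' α T - 1)
    (x : Fin l.length) :
    swapRow (rowj α T) (rowj' α T) ((x : ℕ) + 1) - 1 = ((Equiv.swap pj pj' x : Fin l.length) : ℕ) := by
  have h1 := rowj_pos hc
  have h2 := rowj'_gt hc
  rw [Equiv.swap_apply_def]
  unfold swapRow
  by_cases hx1 : (x : ℕ) + 1 = rowj α T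
  · rw [if_pos hx1, if_pos (by apply Fin.ext; omega)]
    omega
  · rw [if_neg hx1]
    by_cases hx2 : (x : ℕ) + 1 = rowj' α T
    · rw [if_pos hx2, if_neg (by intro h; have := congrArg Fin.val h; omega),
        if_pos (by apply Fin.ext; omega)]
      omega
    · rw [if_neg hx2, if_neg (by intro h; have := congrArg Fin.val h; omega),
        if_neg (by intro h; have := congrArg Fin.val h; omega)]
      omega

/-- the swapped shape is still a peak composition -/
lemma peak_surgA {n : ℕ} (hSF : IsStandardFilling α T) (hpc : PeakCond α T)
    (hα : IsPeakComposition n α) : IsPeakComposition n (surgA α T) := by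
  refine ⟨⟨?_, ?_⟩, ?_⟩
  · intro a ha
    exact hα.1.1 a ((perm_surgA hc).mem_iff.1 ha)
  · rw [(perm_surgA hc).sum_eq]
    exact hα.1.2
  · intro i hi
    rw [length_surgA] at hi
    rw [getD_eq_part]
    have hL2 := colL_ge_two hc hSF hpc
    have hp1 := colL_le_part (α := α) (T := T) hc
    have hp2 := colL_le_part' hc
    rw [part_surgA (by omega) (by omega)]
    by_cases hw : swapRow (rowj α T) (rowj' α T) (i + 1) = rowj α T ∨
        swapRow (rowj α T) (rowj' α T) (i + 1) = rowj' α T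
    · rcases hw with hw | hw <;> rw [hw] <;> omega
    · push_neg at hw
      have hne : i + 1 ≠ rowj α T ∧ i + 1 ≠ rowj' α T := by
        constructor
        · intro h
          apply hw.2
          unfold swapRow
          rw [if_pos h]
        · intro h
          apply hw.1
          unfold swapRow
          have := rowj'_gt hc
          rw [if_neg (by omega), if_pos h]
      rw [swapRow_eq_of_ne hne.1 hne.2]
      have := hα.2 i hi
      rw [getD_eq_part] at this
      exact this

lemma surgA_ne (hnd : α.Nodup) : surgA α T ≠ α := by
  intro h
  have h1 := rowj_pos hc
  have h2 := rowj'_gt hc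
  have h3 := rowj_le_len hc
  have h4 := rowj'_le_len hc
  have hp : part (surgA α T) (rowj α T) = part α (rowj' α T) := by
    rw [part_surgA h1 h3]
    congr 1
    unfold swapRow
    rw [if_pos rfl]
  rw [h] at hp
  -- part α j = part α j' with j ≠ j' contradicts nodup
  unfold part at hp
  rw [List.getD_eq_getElem α 0 (show rowj α T - 1 < α.length by omega)] at hp
  rw [List.getD_eq_getElem α 0 (show rowj' α T - 1 < α.length by omega)] at hp
  have := (List.Nodup.getElem_inj_iff hnd).1 hp
  omega

end EpsLemma

end SignFinite

/-- Let `l` be a strict partition (a composition of `n` with strictly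
decreasing parts; automatically a peak composition). Then
`PYQS_l = Σ_α sgn(σ_α) · QSQ_α`, the sum over all peak compositions `α` whose decreasing
rearrangement is `l`, where `σ_α` is the unique permutation of positions rearranging `α`
into `l`.  The coefficient function `ε` is pinned down by the hypothesis `hε`. -/
theorem PYQS_strict_partition (n : ℕ) (l : List ℕ) (hcomp : IsComposition n l)
    (hstrict : l.Chain' (· > ·)) (ε : List ℕ → ℤ)
    (hε : ∀ α : List ℕ, α.Perm l → ∀ σ : Equiv.Perm (Fin l.length),
      (∀ k : Fin l.length, l.get k = α.getD (σ k : ℕ) 0) →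
      ε α = (Equiv.Perm.sign σ : ℤ)) :
    PYQS n l = ∑ᶠ α ∈ {α : List ℕ | IsPeakComposition n α ∧ α.Perm l}, ε α • QSQ n α := by

  classical
  have hlpw : l.Pairwise (· > ·) := List.isChain_iff_pairwise.1 hstrict
  have hlnd : l.Nodup := hlpw.imp (fun h => (Nat.ne_of_lt h).symm)
  have hstr : ∀ r r', 1 ≤ r → r < r' → r' ≤ l.length → part l r' < part l r := by
    intro r r' h1 h2 h3
    have hi : r - 1 < l.length := by omega
    have hj : r' - 1 < l.length := by omega
    have := (List.pairwise_iff_getElem.1 hlpw) (r - 1) (r' - 1) hi hj (by omega)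
    unfold part
    rw [List.getD_eq_getElem _ _ hi, List.getD_eq_getElem _ _ hj]
    exact this
  have hlpos : ∀ r, 1 ≤ r → r ≤ l.length → 1 ≤ part l r := by
    intro r h1 h2
    unfold part
    rw [List.getD_eq_getElem _ _ (by omega : r - 1 < l.length)]
    exact hcomp.1 _ (List.getElem_mem _)
  have hlpeak : IsPeakComposition n l := by
    refine ⟨hcomp, ?_⟩
    intro i hi
    have h1 := hstr (i + 1) (i + 2) (by omega) (by omega) (by omega)
    have h2 := hlpos (i + 2) (by omega) (by omega)
    rw [getD_eq_part]
    omega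
  -- positivity of parts for any permutation of l
  have hpos_perm : ∀ α : List ℕ, α.Perm l → ∀ r, 1 ≤ r → r ≤ α.length → 1 ≤ part α r := by
    intro α hperm r h1 h2
    unfold part
    rw [List.getD_eq_getElem _ _ (by omega : r - 1 < α.length)]
    exact hcomp.1 _ (hperm.subset (List.getElem_mem _))
  -- ε at l is 1
  have hεl : ε l = 1 := by
    have := hε l (List.Perm.refl l) 1 ?_
    · rw [this, Equiv.Perm.sign_one]
      exact Units.val_one

    · intro k
      show l.get k = l.getD (k : ℕ) 0
      rw [List.get_eq_getElem, List.getD_eq_getElem _ _ k.2]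
  -- the finite index sets
  have hAfin : {α : List ℕ | IsPeakComposition n α ∧ α.Perm l}.Finite := by
    apply Set.Finite.subset (List.permutations l).toFinset.finite_toSet
    rintro α ⟨_, hp⟩
    rw [Finset.mem_coe, List.mem_toFinset, List.mem_permutations]
    exact hp
  set Afin := hAfin.toFinset with hAfinDef
  set Tfin : List ℕ → Finset (ℕ × ℕ → ℕ) := fun α => (spitset_finite α).toFinset with hTfinDef
  set Yfin : Finset (ℕ × ℕ → ℕ) := (spyctset_finite l).toFinset with hYfinDef
  set KC : List ℕ → (ℕ × ℕ → ℕ) → MvPowerSeries ℕ ℤ :=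
    fun α U => Kqs n (compOf n (PeakSet (DesWord (wC α U)))) with hKCdef
  -- convert RHS to finite sums
  have hRHS1 : ∑ᶠ α ∈ {α : List ℕ | IsPeakComposition n α ∧ α.Perm l}, ε α • QSQ n α =
      ∑ α ∈ Afin, ε α • QSQ n α := by
    rw [← hAfin.coe_toFinset, finsum_mem_coe_finset]
  have hQSQ : ∀ α : List ℕ, QSQ n α = ∑ U ∈ Tfin α, KC α U := by
    intro α
    unfold QSQ
    rw [← (spitset_finite α).coe_toFinset, finsum_mem_coe_finset]
  have hRHS2 : ∑ α ∈ Afin, ε α • QSQ n α =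
      ∑ x ∈ Afin.sigma Tfin, ε x.1 • KC x.1 x.2 := by
    rw [Finset.sum_sigma]
    apply Finset.sum_congr rfl
    intro α _
    rw [hQSQ α, Finset.smul_sum]
  -- properties of members
  have hmemS : ∀ x : Σ _ : List ℕ, (ℕ × ℕ → ℕ), x ∈ Afin.sigma Tfin →
      (IsPeakComposition n x.1 ∧ x.1.Perm l) ∧ IsSPIT x.1 x.2 := by
    intro x hx
    rw [Finset.mem_sigma] at hx
    constructor
    · have := hx.1
      rw [hAfinDef, Set.Finite.mem_toFinset] at this
      exact this
    · have := hx.2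
      rw [hTfinDef, Set.Finite.mem_toFinset] at this
      exact this
  -- the key cancellation
  have hsplit := Finset.sum_filter_add_sum_filter_not (Afin.sigma Tfin)
    (fun x => HasColl x.1 x.2) (fun x => ε x.1 • KC x.1 x.2)
  -- ε flips under surgery
  have hεflip : ∀ (α : List ℕ) (U : ℕ × ℕ → ℕ), HasColl α U → α.Perm l →
      ε (surgA α U) = - ε α := by
    intro α U hc hperm
    obtain ⟨σ, hσ⟩ := exists_sigma hlnd hperm
    have hlen : α.length = l.length := hperm.length_eq
    have h1 := rowj_pos hc
    have h2 := rowj'_gt hc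
    have h3 := rowj_le_len hc
    have h4 := rowj'_le_len hc
    set pj : Fin l.length := ⟨rowj α U - 1, by omega⟩ with hpj
    set pj' : Fin l.length := ⟨rowj' α U - 1, by omega⟩ with hpj'
    set σ' : Equiv.Perm (Fin l.length) := σ.trans (Equiv.swap pj pj') with hσ'def
    have hσ' : ∀ k : Fin l.length, l.get k = (surgA α U).getD (σ' k : ℕ) 0 := by
      intro k
      rw [getD_eq_part]
      have hb := (σ' k).isLt
      rw [part_surgA (by omega) (by omega)]
      have hswf := swapRow_fin hc hlen pj pj' rfl rfl (σ' k)
      have : part α (swapRow (rowj α U) (rowj' α U) ((σ' k : ℕ) + 1)) =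
          α.getD (swapRow (rowj α U) (rowj' α U) ((σ' k : ℕ) + 1) - 1) 0 := rfl
      rw [this, hswf]
      have hswsw : Equiv.swap pj pj' (σ' k) = σ k := by
        rw [hσ'def]
        show Equiv.swap pj pj' (Equiv.swap pj pj' (σ k)) = σ k
        exact Equiv.swap_apply_self _ _ _
      rw [hswsw]
      exact hσ k
    have hs1 := hε α hperm σ hσ
    have hs2 := hε (surgA α U) ((perm_surgA hc).trans hperm) σ' hσ'
    have hne : pj ≠ pj' := by
      intro h
      have := congrArg Fin.val h
      rw [hpj, hpj'] at this
      simp only at this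
      omega
    have hsign : Equiv.Perm.sign σ' = - Equiv.Perm.sign σ := by
      rw [hσ'def]
      have : σ.trans (Equiv.swap pj pj') = (Equiv.swap pj pj') * σ := rfl
      rw [this, Equiv.Perm.sign_mul, Equiv.Perm.sign_swap hne, neg_one_mul]
    rw [hs1, hs2, hsign]
    push_cast
    ring
  have hcancel : ∑ x ∈ (Afin.sigma Tfin).filter (fun x => HasColl x.1 x.2),
      ε x.1 • KC x.1 x.2 = 0 := by
    apply Finset.sum_involution (fun x hx => (⟨surgA x.1 x.2, surgT x.1 x.2⟩ : Σ _ : List ℕ, ℕ × ℕ → ℕ))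
    · intro x hx
      rw [Finset.mem_filter] at hx
      obtain ⟨⟨hpk, hperm⟩, hSPIT⟩ := hmemS x hx.1
      have hc : HasColl x.1 x.2 := hx.2
      obtain ⟨⟨hSF, hRI, hFC⟩, hpc⟩ := hSPIT
      have hdes : DesWord (wC (surgA x.1 x.2) (surgT x.1 x.2)) = DesWord (wC x.1 x.2) :=
        des_surg hc hSF hRI
      have hK : KC (surgA x.1 x.2) (surgT x.1 x.2) = KC x.1 x.2 := by
        rw [hKCdef]
        simp only
        rw [hdes]
      show ε x.1 • KC x.1 x.2 + ε (surgA x.1 x.2) • KC (surgA x.1 x.2) (surgT x.1 x.2) = 0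
      rw [hK, hεflip x.1 x.2 hc hperm, neg_smul, add_neg_cancel]
    · intro x hx _
      rw [Finset.mem_filter] at hx
      obtain ⟨⟨hpk, hperm⟩, hSPIT⟩ := hmemS x hx.1
      have hc : HasColl x.1 x.2 := hx.2
      intro h
      have := congrArg Sigma.fst h
      simp only at this
      exact surgA_ne hc (hperm.nodup_iff.2 hlnd) this
    · intro x hx
      rw [Finset.mem_filter] at hx ⊢
      obtain ⟨⟨hpk, hperm⟩, hSPIT⟩ := hmemS x hx.1
      have hc : HasColl x.1 x.2 := hx.2
      obtain ⟨⟨hSF, hRI, hFC⟩, hpc⟩ := hSPIT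
      constructor
      · rw [Finset.mem_sigma]
        constructor
        · rw [hAfinDef, Set.Finite.mem_toFinset]
          exact ⟨peak_surgA hc hSF hpc hpk, (perm_surgA hc).trans hperm⟩
        · rw [hTfinDef, Set.Finite.mem_toFinset]
          exact ⟨⟨surg_SF hc hSF, surg_RI hc hRI, surg_FC hc hFC⟩, surg_peakCond hc hSF hRI hpc⟩
      · exact hasColl_surg hc hRI
    · intro x hx
      rw [Finset.mem_filter] at hx
      obtain ⟨⟨hpk, hperm⟩, hSPIT⟩ := hmemS x hx.1
      have hc : HasColl x.1 x.2 := hx.2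
      obtain ⟨⟨hSF, hRI, hFC⟩, hpc⟩ := hSPIT
      obtain ⟨a, U⟩ := x
      show (⟨surgA (surgA a U) (surgT a U), surgT (surgA a U) (surgT a U)⟩ :
        Σ _ : List ℕ, ℕ × ℕ → ℕ) = ⟨a, U⟩
      rw [surgA_invol hc hSF hRI, surgT_invol hc hSF hRI]
  -- non-colliding part equals the SPYCT sum
  have hfix : ∑ x ∈ (Afin.sigma Tfin).filter (fun x => ¬ HasColl x.1 x.2),
      ε x.1 • KC x.1 x.2 = ∑ U ∈ Yfin, KC l U := by
    apply Finset.sum_bij (fun x _ => x.2)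
    · intro x hx
      rw [Finset.mem_filter] at hx
      obtain ⟨⟨hpk, hperm⟩, hSPIT⟩ := hmemS x hx.1
      obtain ⟨⟨hSF, hRI, hFC⟩, hpc⟩ := hSPIT
      have hnc : ¬ HasColl x.1 x.2 := hx.2
      have hx1 : x.1 = l := by
        have hs := parts_strict_of_noColl hSF hRI hpc hnc (hpos_perm x.1 hperm)
        have hsort : x.1.Pairwise (· > ·) := by
          rw [List.pairwise_iff_getElem]
          intro i j hi hj hij
          have := hs (i + 1) (j + 1) (by omega) (by omega) (by omega)
          rw [getElem_eq_part hi, getElem_eq_part hj]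
          exact this
        exact List.Perm.eq_of_pairwise (fun a b _ _ h1 h2 => by omega) hsort hlpw hperm
      rw [hYfinDef, Set.Finite.mem_toFinset]
      rw [hx1] at hSF hRI hFC hpc hnc
      exact ⟨⟨hSF, hRI, hFC, YT_of_noColl hSF hRI hnc⟩, hpc⟩
    · intro x hx y hy hxy
      rw [Finset.mem_filter] at hx hy
      obtain ⟨⟨hpkx, hpermx⟩, hSPITx⟩ := hmemS x hx.1
      obtain ⟨⟨hpky, hpermy⟩, hSPITy⟩ := hmemS y hy.1
      obtain ⟨⟨hSFx, hRIx, hFCx⟩, hpcx⟩ := hSPITx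
      obtain ⟨⟨hSFy, hRIy, hFCy⟩, hpcy⟩ := hSPITy
      have hx1 : x.1 = l := by
        have hs := parts_strict_of_noColl hSFx hRIx hpcx hx.2 (hpos_perm x.1 hpermx)
        have hsort : x.1.Pairwise (· > ·) := by
          rw [List.pairwise_iff_getElem]
          intro i j hi hj hij
          have := hs (i + 1) (j + 1) (by omega) (by omega) (by omega)
          rw [getElem_eq_part hi, getElem_eq_part hj]
          exact this
        exact List.Perm.eq_of_pairwise (fun a b _ _ h1 h2 => by omega) hsort hlpw hpermx
      have hy1 : y.1 = l := by
        have hs := parts_strict_of_noColl hSFy hRIy hpcy hy.2 (hpos_perm y.1 hpermy)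
        have hsort : y.1.Pairwise (· > ·) := by
          rw [List.pairwise_iff_getElem]
          intro i j hi hj hij
          have := hs (i + 1) (j + 1) (by omega) (by omega) (by omega)
          rw [getElem_eq_part hi, getElem_eq_part hj]
          exact this
        exact List.Perm.eq_of_pairwise (fun a b _ _ h1 h2 => by omega) hsort hlpw hpermy
      obtain ⟨a, U⟩ := x
      obtain ⟨b, V⟩ := y
      simp only at hx1 hy1 hxy
      subst hx1
      subst hy1
      rw [hxy]
    · intro U hU
      rw [hYfinDef, Set.Finite.mem_toFinset] at hU
      obtain ⟨⟨hSF, hRI, hFC, hYT⟩, hpc⟩ := hU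
      have hnc : ¬ HasColl l U := noColl_of_SYCT hSF hRI hYT hstr
      refine ⟨⟨l, U⟩, ?_, rfl⟩
      rw [Finset.mem_filter]
      constructor
      · rw [Finset.mem_sigma]
        constructor
        · rw [hAfinDef, Set.Finite.mem_toFinset]
          exact ⟨hlpeak, List.Perm.refl l⟩
        · rw [hTfinDef, Set.Finite.mem_toFinset]
          exact ⟨⟨hSF, hRI, hFC⟩, hpc⟩
      · exact hnc
    · intro x hx
      rw [Finset.mem_filter] at hx
      obtain ⟨⟨hpk, hperm⟩, hSPIT⟩ := hmemS x hx.1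
      obtain ⟨⟨hSF, hRI, hFC⟩, hpc⟩ := hSPIT
      have hx1 : x.1 = l := by
        have hs := parts_strict_of_noColl hSF hRI hpc hx.2 (hpos_perm x.1 hperm)
        have hsort : x.1.Pairwise (· > ·) := by
          rw [List.pairwise_iff_getElem]
          intro i j hi hj hij
          have := hs (i + 1) (j + 1) (by omega) (by omega) (by omega)
          rw [getElem_eq_part hi, getElem_eq_part hj]
          exact this
        exact List.Perm.eq_of_pairwise (fun a b _ _ h1 h2 => by omega) hsort hlpw hperm
      rw [hx1, hεl, one_smul]
  -- LHS
  have hLHS : PYQS n l = ∑ U ∈ Yfin, KC l U := by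
    unfold PYQS
    rw [← (spyctset_finite l).coe_toFinset, finsum_mem_coe_finset]
    apply Finset.sum_congr rfl
    intro U hU
    rw [Set.Finite.mem_toFinset] at hU
    obtain ⟨⟨hSF, hRI, hFC, hYT⟩, hpc⟩ := hU
    show Kqs n (compOf n (PeakSet (DesWord (wY l U)))) =
      Kqs n (compOf n (PeakSet (DesWord (wC l U))))
    rw [peakSet_wY_eq_wC hSF hRI hFC hlpos]
  rw [hLHS, hRHS1, hRHS2, ← hsplit, hcancel, zero_add, hfix]

end PaperSPIT
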